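/- arXiv:1904.05474 — 2 statements merged into one kernel-verified Lean document; each statement's English description precedes it below -/
import Mathlib

section
/- There is a universal constant C such that the following holds for all n, all ℓ ≥ 2 dividing n, all α > 1 and all ε > 0. There exists a deterministic online algorithm for the online re-embedding model with ℓ servers, each of capacity (1+ε)·n/ℓ, which always keeps every currently-revealed connected component on a single server, never exceeds the server capacities, ends with each ground-truth component alone on one server, and whose total cost on every instance is at most C·(α·n·log₂ n + OPT·(ℓ·log₂ n)/ε), where OPT denotes the optimal offline cost on that instance. -/
open Finset

/-- Two vertices lie in the same connected component revealed by the edge list `E`: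
the reflexive-symmetric-transitive closure of the revealed edge relation. -/
def sameComp {n : ℕ} (E : List (Fin n × Fin n)) (u v : Fin n) : Prop :=
  Relation.EqvGen (fun a b => (a, b) ∈ E ∨ (b, a) ∈ E) u v

/-- An instance of the online re-embedding problem with `n` vertices and `ℓ` servers:
a ground-truth partition into components of size `n/ℓ`, a perfectly balanced initial
assignment, and an online edge sequence each of whose edges joins two vertices of the
same ground-truth component and whose revealed connected components are exactly the
ground-truth components. -/
structure ReInstance (n ℓ : ℕ) where
  truth : Fin n → Fin ℓ
  init : Fin n → Fin ℓ
  sigma : List (Fin n × Fin n)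
  truth_size : ∀ j, (Finset.univ.filter fun v => truth v = j).card = n / ℓ
  init_size : ∀ j, (Finset.univ.filter fun v => init v = j).card = n / ℓ
  edges_within : ∀ e ∈ sigma, truth e.1 = truth e.2
  reveals : ∀ u v, sameComp sigma u v ↔ truth u = truth v

/-- A deterministic online algorithm: given the initial assignment and the prefix of the
edge sequence revealed so far, it produces the current assignment of vertices to servers. -/
abbrev OnlineAlg (n ℓ : ℕ) := (Fin n → Fin ℓ) → List (Fin n × Fin n) → Fin n → Fin ℓ

/-- The assignment maintained by online algorithm `A` after `t` requests of `σ` have been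
processed (the assignment is `a0` before any request). -/
def state {n ℓ : ℕ} (A : OnlineAlg n ℓ) (a0 : Fin n → Fin ℓ)
    (σ : List (Fin n × Fin n)) : ℕ → Fin n → Fin ℓ
  | 0 => a0
  | t + 1 => A a0 (σ.take (t + 1))

/-- The number of vertices reassigned when changing assignment `f` into assignment `g`. -/
def movesBetween {n ℓ : ℕ} (f g : Fin n → Fin ℓ) : ℕ :=
  (Finset.univ.filter fun v => f v ≠ g v).card

/-- Total number of vertex moves performed by online algorithm `A` on the instance. -/
def algMoves {n ℓ : ℕ} (A : OnlineAlg n ℓ) (a0 : Fin n → Fin ℓ)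
    (σ : List (Fin n × Fin n)) : ℕ :=
  ∑ t ∈ Finset.range σ.length,
    movesBetween (state A a0 σ t) (state A a0 σ (t + 1))

/-- Total communication cost of online algorithm `A`: one unit for every request whose
endpoints are on different servers at the time of the request. -/
def algComm {n ℓ : ℕ} (A : OnlineAlg n ℓ) (a0 : Fin n → Fin ℓ)
    (σ : List (Fin n × Fin n)) : ℕ :=
  ∑ t : Fin σ.length,
    if state A a0 σ t.val (σ.get t).1 ≠ state A a0 σ t.val (σ.get t).2 then 1 else 0

/-- Total cost of online algorithm `A`: `α` per vertex move plus the communication cost. -/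
def algCost {n ℓ : ℕ} (α : ℝ) (A : OnlineAlg n ℓ) (a0 : Fin n → Fin ℓ)
    (σ : List (Fin n × Fin n)) : ℝ :=
  α * algMoves A a0 σ + algComm A a0 σ

/-- An assignment is valid for augmentation `ε`: each server load is at most `(1+ε)·n/ℓ`. -/
def validCap {n ℓ : ℕ} (ε : ℝ) (f : Fin n → Fin ℓ) : Prop :=
  ∀ j, ((Finset.univ.filter fun v => f v = j).card : ℝ) ≤ (1 + ε) * n / ℓ

/-- An assignment is a perfect partitioning: its classes are exactly the
ground-truth components, i.e. each ground-truth component is alone on one server. -/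
def isPerfect {n ℓ : ℕ} (truth f : Fin n → Fin ℓ) : Prop :=
  ∀ u v, f u = f v ↔ truth u = truth v

/-- `f` assigns all vertices of each connected component revealed by `E` to one server. -/
def collocates {n ℓ : ℕ} (E : List (Fin n × Fin n)) (f : Fin n → Fin ℓ) : Prop :=
  ∀ u v, sameComp E u v → f u = f v

/-- Number of vertex moves of an offline schedule `g` (which may also move vertices
before the first request). -/
def schedMoves {n ℓ : ℕ} (a0 : Fin n → Fin ℓ) (σ : List (Fin n × Fin n))
    (g : ℕ → Fin n → Fin ℓ) : ℕ :=
  movesBetween a0 (g 0) +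
    ∑ t ∈ Finset.range σ.length, movesBetween (g t) (g (t + 1))

/-- Communication cost of an offline schedule `g`. -/
def schedComm {n ℓ : ℕ} (σ : List (Fin n × Fin n)) (g : ℕ → Fin n → Fin ℓ) : ℕ :=
  ∑ t : Fin σ.length, if g t.val (σ.get t).1 ≠ g t.val (σ.get t).2 then 1 else 0

/-- The optimal offline cost: the infimum cost over all offline schedules which respect
the capacity `(1+ε)·n/ℓ` at all times and end with a perfect partitioning. -/
noncomputable def OPTcost {n ℓ : ℕ} (α ε : ℝ) (I : ReInstance n ℓ) : ℝ :=
  sInf { c : ℝ | ∃ g : ℕ → Fin n → Fin ℓ,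
    (∀ t, validCap ε (g t)) ∧ isPerfect I.truth (g I.sigma.length) ∧
    c = α * schedMoves I.init I.sigma g + schedComm I.sigma g }

/-- The minimum number of vertex moves of any offline schedule which respects the
capacity `(1+ε)·n/ℓ` at all times and ends with a perfect partitioning. -/
noncomputable def OPTmoves {n ℓ : ℕ} (ε : ℝ) (I : ReInstance n ℓ) : ℕ :=
  sInf { m : ℕ | ∃ g : ℕ → Fin n → Fin ℓ,
    (∀ t, validCap ε (g t)) ∧ isPerfect I.truth (g I.sigma.length) ∧
    m = schedMoves I.init I.sigma g }

namespace SLR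
open Classical

variable {n ℓ : ℕ}

/-! ### sameComp basics -/

theorem sameComp_refl (E : List (Fin n × Fin n)) (v : Fin n) : sameComp E v v :=
  Relation.EqvGen.refl v

theorem sameComp_symm {E : List (Fin n × Fin n)} {u v : Fin n}
    (h : sameComp E u v) : sameComp E v u := Relation.EqvGen.symm _ _ h

theorem sameComp_trans {E : List (Fin n × Fin n)} {u v w : Fin n}
    (h : sameComp E u v) (h' : sameComp E v w) : sameComp E u w :=
  Relation.EqvGen.trans _ _ _ h h'

theorem sameComp_mono {E E' : List (Fin n × Fin n)} (hsub : ∀ e ∈ E, e ∈ E')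
    {u v : Fin n} (h : sameComp E u v) : sameComp E' u v := by
  induction h with
  | rel a b hab => exact Relation.EqvGen.rel a b (hab.imp (hsub _) (hsub _))
  | refl a => exact Relation.EqvGen.refl a
  | symm a b _ ih => exact Relation.EqvGen.symm _ _ ih
  | trans a b c _ _ ih1 ih2 => exact Relation.EqvGen.trans _ _ _ ih1 ih2

theorem sameComp_nil {u v : Fin n} (h : sameComp [] u v) : u = v := by
  induction h with
  | rel a b hab => simp at hab
  | refl a => rfl
  | symm a b _ ih => exact ih.symm
  | trans a b c _ _ ih1 ih2 => exact ih1.trans ih2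

theorem sameComp_of_mem {E : List (Fin n × Fin n)} {e : Fin n × Fin n} (he : e ∈ E) :
    sameComp E e.1 e.2 := Relation.EqvGen.rel _ _ (Or.inl (by simpa using he))

/-- Decomposition of connectivity after adding one edge. -/
theorem sameComp_concat {E : List (Fin n × Fin n)} {e : Fin n × Fin n} {u v : Fin n}
    (h : sameComp (E ++ [e]) u v) :
    sameComp E u v ∨
      ((sameComp E u e.1 ∨ sameComp E u e.2) ∧ (sameComp E v e.1 ∨ sameComp E v e.2)) := by
  induction h with
  | rel a b hab =>
    rcases hab with hab | hab <;> rcases List.mem_append.1 hab with h' | h'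
    · exact Or.inl (Relation.EqvGen.rel _ _ (Or.inl h'))
    · simp only [List.mem_singleton] at h'
      refine Or.inr ⟨Or.inl ?_, Or.inr ?_⟩ <;>
        · rw [← h']; exact Relation.EqvGen.refl _
    · exact Or.inl (Relation.EqvGen.rel _ _ (Or.inr h'))
    · simp only [List.mem_singleton] at h'
      refine Or.inr ⟨Or.inr ?_, Or.inl ?_⟩ <;>
        · rw [← h']; exact Relation.EqvGen.refl _
  | refl a => exact Or.inl (Relation.EqvGen.refl a)
  | symm a b _ ih => exact ih.imp sameComp_symm And.symm
  | trans a b c _ _ ih1 ih2 =>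
    rcases ih1 with h1 | h1 <;> rcases ih2 with h2 | h2
    · exact Or.inl (sameComp_trans h1 h2)
    · exact Or.inr ⟨h2.1.imp (sameComp_trans h1) (sameComp_trans h1), h2.2⟩
    · exact Or.inr ⟨h1.1, h1.2.imp
        (fun h => sameComp_trans (sameComp_symm h2) h)
        (fun h => sameComp_trans (sameComp_symm h2) h)⟩
    · exact Or.inr ⟨h1.1, h2.2⟩

/-- Adding an edge inside an existing component does not change connectivity. -/
theorem sameComp_concat_iff {E : List (Fin n × Fin n)} {e : Fin n × Fin n}
    (he : sameComp E e.1 e.2) (u v : Fin n) :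
    sameComp (E ++ [e]) u v ↔ sameComp E u v := by
  constructor
  · intro h
    rcases sameComp_concat h with h' | ⟨h1, h2⟩
    · exact h'
    · have h1' : sameComp E u e.1 := h1.elim id fun h => sameComp_trans h (sameComp_symm he)
      have h2' : sameComp E v e.1 := h2.elim id fun h => sameComp_trans h (sameComp_symm he)
      exact sameComp_trans h1' (sameComp_symm h2')
  · exact sameComp_mono fun x hx => List.mem_append.2 (Or.inl hx)

/-! ### movesBetween basics -/

theorem movesBetween_comm (f g : Fin n → Fin ℓ) : movesBetween f g = movesBetween g f := by
  unfold movesBetween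
  congr 1
  exact Finset.filter_congr fun v _ => by simp [ne_comm]

theorem movesBetween_triangle (f g h : Fin n → Fin ℓ) :
    movesBetween f h ≤ movesBetween f g + movesBetween g h := by
  unfold movesBetween
  refine le_trans (Finset.card_le_card ?_) (Finset.card_union_le _ _)
  intro v hv
  simp only [Finset.mem_filter, Finset.mem_union, Finset.mem_univ, true_and] at *
  by_contra hc
  push_neg at hc
  exact hv (hc.1.trans hc.2)

theorem movesBetween_eq_zero {f g : Fin n → Fin ℓ} (h : movesBetween f g = 0) : f = g := by
  funext v
  by_contra hv
  have : v ∈ Finset.univ.filter fun v => f v ≠ g v := by simp [hv]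
  rw [movesBetween, Finset.card_eq_zero] at h
  simp [h] at this

theorem movesBetween_le (f g : Fin n → Fin ℓ) : movesBetween f g ≤ n := by
  simpa [movesBetween] using Finset.card_filter_le Finset.univ fun v => f v ≠ g v

end SLR

namespace SLR
open Classical

variable {n ℓ : ℕ}

/-! ### components as finsets -/

noncomputable def compF (E : List (Fin n × Fin n)) (v : Fin n) : Finset (Fin n) :=
  Finset.univ.filter fun u => sameComp E u v

theorem mem_compF {E : List (Fin n × Fin n)} {u v : Fin n} :
    u ∈ compF E v ↔ sameComp E u v := by simp [compF]

theorem self_mem_compF (E : List (Fin n × Fin n)) (v : Fin n) : v ∈ compF E v :=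
  mem_compF.2 (sameComp_refl E v)

theorem compF_card_pos (E : List (Fin n × Fin n)) (v : Fin n) : 0 < (compF E v).card :=
  Finset.card_pos.2 ⟨v, self_mem_compF E v⟩

theorem compF_eq_of_sameComp {E : List (Fin n × Fin n)} {u v : Fin n}
    (h : sameComp E u v) : compF E u = compF E v := by
  ext w
  simp only [mem_compF]
  exact ⟨fun h' => sameComp_trans h' h, fun h' => sameComp_trans h' (sameComp_symm h)⟩

theorem compF_mono {E E' : List (Fin n × Fin n)} (hsub : ∀ e ∈ E, e ∈ E') (v : Fin n) :
    compF E v ⊆ compF E' v := fun u hu => mem_compF.2 (sameComp_mono hsub (mem_compF.1 hu))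

theorem compF_congr {E E' : List (Fin n × Fin n)}
    (h : ∀ u v : Fin n, sameComp E u v ↔ sameComp E' u v) (v : Fin n) :
    compF E v = compF E' v := by
  ext u; simp only [mem_compF]; exact h u v

theorem compF_disjoint {E : List (Fin n × Fin n)} {u v : Fin n}
    (h : ¬ sameComp E u v) : Disjoint (compF E u) (compF E v) := by
  rw [Finset.disjoint_left]
  intro w hwu hwv
  exact h (sameComp_trans (sameComp_symm (mem_compF.1 hwu)) (mem_compF.1 hwv))

/-! ### loads -/

noncomputable def load (g : Fin n → Fin ℓ) (j : Fin ℓ) : ℕ :=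
  (Finset.univ.filter fun v => g v = j).card

/-! ### exact candidates and canonical regrouping -/

noncomputable def exactCands (E : List (Fin n × Fin n)) : Finset (Fin n → Fin ℓ) :=
  Finset.univ.filter fun g => collocates E g ∧ ∀ j, load g j = n / ℓ

theorem mem_exactCands {E : List (Fin n × Fin n)} {g : Fin n → Fin ℓ} :
    g ∈ exactCands E ↔ collocates E g ∧ ∀ j, load g j = n / ℓ := by simp [exactCands]

theorem exactCands_congr {E E' : List (Fin n × Fin n)}
    (h : ∀ u v : Fin n, sameComp E u v ↔ sameComp E' u v) :
    (exactCands E : Finset (Fin n → Fin ℓ)) = exactCands E' := by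
  unfold exactCands
  refine Finset.filter_congr fun g _ => ?_
  have : collocates E g ↔ collocates E' g := by
    unfold collocates
    exact ⟨fun hc u v huv => hc u v ((h u v).2 huv), fun hc u v huv => hc u v ((h u v).1 huv)⟩
  rw [this]

noncomputable def pick (a0 : Fin n → Fin ℓ) (S : Finset (Fin n → Fin ℓ)) : Fin n → Fin ℓ :=
  if h : S.Nonempty then (Finset.exists_min_image S (fun g => movesBetween a0 g) h).choose
  else a0

theorem pick_mem {a0 : Fin n → Fin ℓ} {S : Finset (Fin n → Fin ℓ)} (h : S.Nonempty) :
    pick a0 S ∈ S := by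
  rw [pick, dif_pos h]
  exact (Finset.exists_min_image S (fun g => movesBetween a0 g) h).choose_spec.1

theorem pick_min {a0 : Fin n → Fin ℓ} {S : Finset (Fin n → Fin ℓ)} (h : S.Nonempty)
    {g : Fin n → Fin ℓ} (hg : g ∈ S) : movesBetween a0 (pick a0 S) ≤ movesBetween a0 g := by
  rw [pick, dif_pos h]
  exact (Finset.exists_min_image S (fun g => movesBetween a0 g) h).choose_spec.2 g hg

noncomputable def canonG (a0 : Fin n → Fin ℓ) (E : List (Fin n × Fin n)) : Fin n → Fin ℓ :=
  pick a0 (exactCands E)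

/-! ### step ingredients -/

def complete (k : ℕ) (E : List (Fin n × Fin n)) : Prop :=
  ∀ v : Fin n, (compF E v).card = k

noncomputable def xe (E : List (Fin n × Fin n)) (e : Fin n × Fin n) : Fin n :=
  if (compF E e.1).card ≤ (compF E e.2).card then e.1 else e.2

noncomputable def ye (E : List (Fin n × Fin n)) (e : Fin n × Fin n) : Fin n :=
  if (compF E e.1).card ≤ (compF E e.2).card then e.2 else e.1

noncomputable def wgt (E : List (Fin n × Fin n)) (e : Fin n × Fin n) : ℕ :=
  (compF E (xe E e)).card

theorem wgt_le (E : List (Fin n × Fin n)) (e : Fin n × Fin n) :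
    wgt E e ≤ (compF E (ye E e)).card := by
  unfold wgt xe ye
  split_ifs with h
  · exact h
  · exact le_of_not_ge h

theorem xye_pair (E : List (Fin n × Fin n)) (e : Fin n × Fin n) :
    (xe E e = e.1 ∧ ye E e = e.2) ∨ (xe E e = e.2 ∧ ye E e = e.1) := by
  unfold xe ye; split_ifs <;> simp

noncomputable def moveF (f : Fin n → Fin ℓ) (E : List (Fin n × Fin n)) (e : Fin n × Fin n) :
    Fin n → Fin ℓ :=
  fun u => if sameComp E u (xe E e) then f (ye E e) else f u

noncomputable def stepF (ε : ℝ) (a0 f : Fin n → Fin ℓ) (acc : ℕ)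
    (E' : List (Fin n × Fin n)) (e : Fin n × Fin n) : (Fin n → Fin ℓ) × ℕ :=
  if complete (n / ℓ) (E' ++ [e]) then (canonG a0 (E' ++ [e]), 0)
  else if sameComp E' e.1 e.2 then (f, acc)
  else if ((acc + wgt E' e : ℕ) : ℝ) ≤ ε * n / ℓ then (moveF f E' e, acc + wgt E' e)
  else (canonG a0 (E' ++ [e]), 0)

noncomputable def runF (ε : ℝ) (a0 : Fin n → Fin ℓ) (E : List (Fin n × Fin n)) :
    (Fin n → Fin ℓ) × ℕ :=
  if h : E = [] then (a0, 0)
  else stepF ε a0 (runF ε a0 E.dropLast).1 (runF ε a0 E.dropLast).2 E.dropLast (E.getLast h)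
  termination_by E.length
  decreasing_by
    have : 0 < E.length := List.length_pos_iff.2 h
    simp [List.length_dropLast]; omega

noncomputable def algo (ε : ℝ) : OnlineAlg n ℓ := fun a0 E => (runF ε a0 E).1

theorem runF_nil (ε : ℝ) (a0 : Fin n → Fin ℓ) : runF ε a0 [] = (a0, 0) := by
  rw [runF]; simp

theorem runF_concat (ε : ℝ) (a0 : Fin n → Fin ℓ) (E' : List (Fin n × Fin n))
    (e : Fin n × Fin n) :
    runF ε a0 (E' ++ [e]) =
      stepF ε a0 (runF ε a0 E').1 (runF ε a0 E').2 E' e := by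
  rw [runF]
  have h : E' ++ [e] ≠ [] := by simp
  rw [dif_neg h]
  congr 1 <;> try rw [List.dropLast_concat]
  · rw [List.getLast_append]
    simp

end SLR

namespace SLR
open Classical

section Main

variable {n ℓ : ℕ} (ε : ℝ) (I : ReInstance n ℓ)

/-- truth class as a finset -/
noncomputable def tcl (I : ReInstance n ℓ) (v : Fin n) : Finset (Fin n) :=
  Finset.univ.filter fun u => I.truth u = I.truth v

theorem tcl_card (v : Fin n) : (tcl I v).card = n / ℓ := I.truth_size (I.truth v)

theorem prefix_truth {t : ℕ} {u v : Fin n}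
    (h : sameComp (I.sigma.take t) u v) : I.truth u = I.truth v :=
  (I.reveals u v).1 (sameComp_mono (fun e he => List.take_subset t I.sigma he) h)

theorem compF_subset_tcl (t : ℕ) (v : Fin n) : compF (I.sigma.take t) v ⊆ tcl I v := by
  intro u hu
  simp only [tcl, Finset.mem_filter, Finset.mem_univ, true_and]
  exact prefix_truth I (mem_compF.1 hu)

theorem compF_card_le (t : ℕ) (v : Fin n) : (compF (I.sigma.take t) v).card ≤ n / ℓ := by
  rw [← tcl_card I v]
  exact Finset.card_le_card (compF_subset_tcl I t v)

/-- a perfect assignment has all loads exactly `n/ℓ` -/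
theorem load_of_perfect (hn : n ≠ 0) {g : Fin n → Fin ℓ} (hg : isPerfect I.truth g)
    (j : Fin ℓ) : load g j = n / ℓ := by
  have hk : 0 < n / ℓ := by
    by_contra hc
    push_neg at hc
    have h0 : n / ℓ = 0 := Nat.le_zero.mp hc
    have v : Fin n := ⟨0, Nat.pos_of_ne_zero hn⟩
    have h1 := I.truth_size (I.truth v)
    rw [h0, Finset.card_eq_zero, Finset.filter_eq_empty_iff] at h1
    exact h1 (Finset.mem_univ v) rfl
  -- each truth class is nonempty; choose witnesses
  have hw : ∀ j' : Fin ℓ, ∃ v : Fin n, I.truth v = j' := by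
    intro j'
    have hpos : 0 < (Finset.univ.filter fun v => I.truth v = j').card := by
      rw [I.truth_size]; exact hk
    obtain ⟨v, hv⟩ := Finset.card_pos.1 hpos
    exact ⟨v, (Finset.mem_filter.1 hv).2⟩
  choose w hwspec using hw
  have hinj : Function.Injective (fun j' => g (w j')) := by
    intro j1 j2 h12
    have := (hg (w j1) (w j2)).1 h12
    rw [hwspec j1, hwspec j2] at this
    exact this
  have hsurj : Function.Surjective (fun j' => g (w j')) :=
    Finite.surjective_of_injective hinj
  obtain ⟨j', hj'⟩ := hsurj j
  have : (Finset.univ.filter fun v => g v = j) =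
      Finset.univ.filter fun v => I.truth v = I.truth (w j') := by
    ext v
    simp only [Finset.mem_filter, Finset.mem_univ, true_and]
    rw [← hj']
    exact hg v (w j')
  rw [load, this, I.truth_size]

end Main
end SLR

namespace SLR
open Classical

section Opt

variable {n ℓ : ℕ} (I : ReInstance n ℓ)

theorem truth_isPerfect : isPerfect I.truth I.truth := fun _ _ => Iff.rfl

noncomputable def perfSet (I : ReInstance n ℓ) : Finset (Fin n → Fin ℓ) :=
  Finset.univ.filter fun g => isPerfect I.truth g

theorem perfSet_nonempty : (perfSet I).Nonempty :=
  ⟨I.truth, by simp [perfSet, truth_isPerfect]⟩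

noncomputable def pstar (I : ReInstance n ℓ) : Fin n → Fin ℓ :=
  (Finset.exists_min_image (perfSet I) (fun g => movesBetween I.init g)
    (perfSet_nonempty I)).choose

noncomputable def dOpt (I : ReInstance n ℓ) : ℕ := movesBetween I.init (pstar I)

theorem pstar_perfect : isPerfect I.truth (pstar I) := by
  have h := (Finset.exists_min_image (perfSet I) (fun g => movesBetween I.init g)
    (perfSet_nonempty I)).choose_spec.1
  exact (Finset.mem_filter.1 h).2

theorem dOpt_min {g : Fin n → Fin ℓ} (hg : isPerfect I.truth g) :
    dOpt I ≤ movesBetween I.init g :=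
  (Finset.exists_min_image (perfSet I) (fun g => movesBetween I.init g)
    (perfSet_nonempty I)).choose_spec.2 g (by simp [perfSet, hg])

theorem dOpt_le_n : dOpt I ≤ n := movesBetween_le _ _

/-- membership of the optimal perfect assignment in the exact candidates of a
truth-consistent edge list -/
theorem pstar_mem_exactCands (hn : n ≠ 0) {E : List (Fin n × Fin n)}
    (hcons : ∀ u v : Fin n, sameComp E u v → I.truth u = I.truth v) :
    pstar I ∈ exactCands E := by
  rw [mem_exactCands]
  constructor
  · intro u v huv
    exact (pstar_perfect I u v).2 (hcons u v huv)
  · exact load_of_perfect I hn (pstar_perfect I)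

theorem canonG_spec (hn : n ≠ 0) {E : List (Fin n × Fin n)}
    (hcons : ∀ u v : Fin n, sameComp E u v → I.truth u = I.truth v) :
    collocates E (canonG I.init E) ∧ (∀ j, load (canonG I.init E) j = n / ℓ) ∧
      movesBetween I.init (canonG I.init E) ≤ dOpt I := by
  have hne : (exactCands E : Finset (Fin n → Fin ℓ)).Nonempty :=
    ⟨pstar I, pstar_mem_exactCands I hn hcons⟩
  have hmem := mem_exactCands.1 (pick_mem (a0 := I.init) hne)
  exact ⟨hmem.1, hmem.2, pick_min hne (pstar_mem_exactCands I hn hcons)⟩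

/-- an exact grouping for the full sequence is perfect -/
theorem perfect_of_exactCands (hn : n ≠ 0) {g : Fin n → Fin ℓ}
    (hcol : collocates I.sigma g) (hload : ∀ j, load g j = n / ℓ) :
    isPerfect I.truth g := by
  have hk : 0 < n / ℓ := by
    by_contra hc
    push_neg at hc
    have h0 : n / ℓ = 0 := Nat.le_zero.mp hc
    have v : Fin n := ⟨0, Nat.pos_of_ne_zero hn⟩
    have h1 := I.truth_size (I.truth v)
    rw [h0, Finset.card_eq_zero, Finset.filter_eq_empty_iff] at h1
    exact h1 (Finset.mem_univ v) rfl
  intro u v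
  constructor
  · intro huv
    by_contra htuv
    -- the two distinct truth classes of u and v are both on server g u
    have hsub : tcl I u ∪ tcl I v ⊆ Finset.univ.filter fun w => g w = g u := by
      intro w hw
      simp only [Finset.mem_union, tcl, Finset.mem_filter, Finset.mem_univ, true_and] at hw ⊢
      rcases hw with hw | hw
      · exact hcol w u ((I.reveals w u).2 hw)
      · rw [huv]
        exact hcol w v ((I.reveals w v).2 hw)
    have hdisj : Disjoint (tcl I u) (tcl I v) := by
      rw [Finset.disjoint_left]
      intro w hwu hwv
      simp only [tcl, Finset.mem_filter, Finset.mem_univ, true_and] at hwu hwv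
      exact htuv (hwu ▸ hwv ▸ rfl)
    have hcard := Finset.card_le_card hsub
    rw [Finset.card_union_of_disjoint hdisj, tcl_card, tcl_card] at hcard
    have := hload (g u)
    rw [load] at this
    omega
  · intro htuv
    exact hcol u v ((I.reveals u v).2 htuv)

end Opt
end SLR

namespace SLR
open Classical

section Run

variable {n ℓ : ℕ}

noncomputable def Et (I : ReInstance n ℓ) (t : ℕ) : List (Fin n × Fin n) := I.sigma.take t

noncomputable def ft (ε : ℝ) (I : ReInstance n ℓ) (t : ℕ) : Fin n → Fin ℓ :=
  (runF ε I.init (Et I t)).1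

noncomputable def acct (ε : ℝ) (I : ReInstance n ℓ) (t : ℕ) : ℕ :=
  (runF ε I.init (Et I t)).2

noncomputable def ed (I : ReInstance n ℓ) (hn : n ≠ 0) (t : ℕ) : Fin n × Fin n :=
  I.sigma.getD t (⟨0, Nat.pos_of_ne_zero hn⟩, ⟨0, Nat.pos_of_ne_zero hn⟩)

variable (ε : ℝ) (I : ReInstance n ℓ)

theorem ed_eq (hn : n ≠ 0) {t : ℕ} (ht : t < I.sigma.length) : ed I hn t = I.sigma.get ⟨t, ht⟩ := by
  rw [ed, List.getD_eq_getElem _ _ ht, List.get_eq_getElem]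

theorem Et_concat (hn : n ≠ 0) {t : ℕ} (ht : t < I.sigma.length) :
    Et I (t + 1) = Et I t ++ [ed I hn t] := by
  rw [Et, Et, List.take_succ, List.getElem?_eq_getElem ht]
  rw [ed, List.getD_eq_getElem _ _ ht]
  rfl

theorem Et_sub_sigma (t : ℕ) : ∀ e ∈ Et I t, e ∈ I.sigma := fun e he =>
  List.take_subset t I.sigma he

theorem Et_sub_Et {s t : ℕ} (hst : s ≤ t) : ∀ e ∈ Et I s, e ∈ Et I t := by
  intro e he
  have : Et I s = (Et I t).take s := by
    rw [Et, Et, List.take_take, min_eq_left hst]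
  rw [this] at he
  exact List.take_subset s (Et I t) he

theorem Et_stable {t : ℕ} (ht : I.sigma.length ≤ t) : Et I t = I.sigma :=
  List.take_of_length_le ht

theorem state_eq (t : ℕ) : state (algo ε) I.init I.sigma t = ft ε I t := by
  cases t with
  | zero => rw [state, ft, Et, List.take_zero, runF_nil]
  | succ t => rfl

theorem run_step (hn : n ≠ 0) {t : ℕ} (ht : t < I.sigma.length) :
    runF ε I.init (Et I (t + 1)) =
      stepF ε I.init (ft ε I t) (acct ε I t) (Et I t) (ed I hn t) := by
  rw [Et_concat I hn ht, runF_concat]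
  rfl

/-! ### step predicates -/

noncomputable def mrg (hn : n ≠ 0) (t : ℕ) : Prop :=
  ¬ sameComp (Et I t) (ed I hn t).1 (ed I hn t).2

noncomputable def wv (hn : n ≠ 0) (t : ℕ) : ℕ :=
  if mrg I hn t then wgt (Et I t) (ed I hn t) else 0

noncomputable def cmpl (t : ℕ) : Prop := complete (n / ℓ) (Et I t)

noncomputable def ovf (hn : n ≠ 0) (t : ℕ) : Prop :=
  ¬ cmpl I (t + 1) ∧ mrg I hn t ∧
    ¬ (((acct ε I t + wgt (Et I t) (ed I hn t) : ℕ) : ℝ) ≤ ε * n / ℓ)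

noncomputable def rst (hn : n ≠ 0) (t : ℕ) : Prop :=
  (cmpl I (t + 1) ∧ ¬ cmpl I t) ∨ ovf ε I hn t

noncomputable def rhov (hn : n ≠ 0) (t : ℕ) : ℕ := if rst ε I hn t then 1 else 0

noncomputable def orhov (hn : n ≠ 0) (t : ℕ) : ℕ := if ovf ε I hn t then 1 else 0

noncomputable def deltav (hn : n ≠ 0) (t : ℕ) : ℕ := if rst ε I hn t then acct ε I t else 0

noncomputable def mt (t : ℕ) : ℕ := movesBetween (ft ε I t) (ft ε I (t + 1))

/-! ### the four branches of a step -/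

theorem case_cmp (hn : n ≠ 0) {t : ℕ} (ht : t < I.sigma.length) (hc : cmpl I (t + 1)) :
    ft ε I (t + 1) = canonG I.init (Et I (t + 1)) ∧ acct ε I (t + 1) = 0 := by
  have hE := Et_concat I hn ht
  rw [ft, acct, run_step ε I hn ht, stepF, ← hE,
    if_pos (show complete (n / ℓ) (Et I (t + 1)) from hc)]
  exact ⟨rfl, rfl⟩

theorem case_nomrg (hn : n ≠ 0) {t : ℕ} (ht : t < I.sigma.length) (hc : ¬ cmpl I (t + 1))
    (hm : ¬ mrg I hn t) :
    ft ε I (t + 1) = ft ε I t ∧ acct ε I (t + 1) = acct ε I t := by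
  have hE := Et_concat I hn ht
  rw [mrg, not_not] at hm
  rw [ft, acct, run_step ε I hn ht, stepF, ← hE,
    if_neg (show ¬ complete (n / ℓ) (Et I (t + 1)) from hc), if_pos hm]
  exact ⟨rfl, rfl⟩

theorem case_move (hn : n ≠ 0) {t : ℕ} (ht : t < I.sigma.length) (hc : ¬ cmpl I (t + 1))
    (hm : mrg I hn t)
    (hle : ((acct ε I t + wgt (Et I t) (ed I hn t) : ℕ) : ℝ) ≤ ε * n / ℓ) :
    ft ε I (t + 1) = moveF (ft ε I t) (Et I t) (ed I hn t) ∧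
      acct ε I (t + 1) = acct ε I t + wgt (Et I t) (ed I hn t) := by
  have hE := Et_concat I hn ht
  rw [ft, acct, run_step ε I hn ht, stepF, ← hE,
    if_neg (show ¬ complete (n / ℓ) (Et I (t + 1)) from hc),
    if_neg (show ¬ sameComp (Et I t) (ed I hn t).1 (ed I hn t).2 from hm), if_pos hle]
  exact ⟨rfl, rfl⟩

theorem case_ovf (hn : n ≠ 0) {t : ℕ} (ht : t < I.sigma.length) (hc : ¬ cmpl I (t + 1))
    (hm : mrg I hn t)
    (hgt : ¬ ((acct ε I t + wgt (Et I t) (ed I hn t) : ℕ) : ℝ) ≤ ε * n / ℓ) :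
    ft ε I (t + 1) = canonG I.init (Et I (t + 1)) ∧ acct ε I (t + 1) = 0 := by
  have hE := Et_concat I hn ht
  rw [ft, acct, run_step ε I hn ht, stepF, ← hE,
    if_neg (show ¬ complete (n / ℓ) (Et I (t + 1)) from hc),
    if_neg (show ¬ sameComp (Et I t) (ed I hn t).1 (ed I hn t).2 from hm), if_neg hgt]
  exact ⟨rfl, rfl⟩

/-! ### completeness stability -/

theorem cmpl_stable {s t : ℕ} (hs : cmpl I s) (hst : s ≤ t) :
    (∀ u v : Fin n, sameComp (Et I t) u v ↔ sameComp (Et I s) u v) ∧ cmpl I t := by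
  have key : ∀ v, compF (Et I s) v = tcl I v := by
    intro v
    refine Finset.eq_of_subset_of_card_le (compF_subset_tcl I s v) ?_
    rw [tcl_card, hs v]
  have key2 : ∀ v, compF (Et I t) v = tcl I v := by
    intro v
    refine Finset.eq_of_subset_of_card_le (compF_subset_tcl I t v) ?_
    rw [tcl_card, ← hs v]
    exact Finset.card_le_card (compF_mono (Et_sub_Et I hst) v)
  constructor
  · intro u v
    rw [← mem_compF, ← mem_compF, key2 v, key v]
  · intro v
    rw [key2 v, tcl_card]

theorem cmpl_final : cmpl I I.sigma.length := by
  intro v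
  have : compF (Et I I.sigma.length) v = tcl I v := by
    ext u
    rw [mem_compF, Et_stable I le_rfl]
    simp only [tcl, Finset.mem_filter, Finset.mem_univ, true_and]
    exact I.reveals u v
  rw [this, tcl_card]

end Run
end SLR

namespace SLR
open Classical

section MoveLemmas

variable {n ℓ : ℕ}

theorem movesBetween_self (f : Fin n → Fin ℓ) : movesBetween f f = 0 := by
  simp [movesBetween]

theorem not_sameComp_xy {E : List (Fin n × Fin n)} {e : Fin n × Fin n}
    (hm : ¬ sameComp E e.1 e.2) : ¬ sameComp E (xe E e) (ye E e) := by
  rcases xye_pair E e with ⟨hx, hy⟩ | ⟨hx, hy⟩ <;> rw [hx, hy]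
  · exact hm
  · exact fun h => hm (sameComp_symm h)

theorem moveF_of_rel {E : List (Fin n × Fin n)} {e : Fin n × Fin n} {f : Fin n → Fin ℓ}
    (hcol : collocates E f) (hm : ¬ sameComp E e.1 e.2) {z : Fin n}
    (hz : sameComp E z e.1 ∨ sameComp E z e.2) :
    moveF f E e z = f (ye E e) := by
  have hz' : sameComp E z (xe E e) ∨ sameComp E z (ye E e) := by
    rcases xye_pair E e with ⟨hx, hy⟩ | ⟨hx, hy⟩ <;> rw [hx, hy] <;> tauto
  rcases hz' with h | h
  · rw [moveF, if_pos h]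
  · have hnx : ¬ sameComp E z (xe E e) := fun h' =>
      not_sameComp_xy hm (sameComp_trans (sameComp_symm h') h)
    rw [moveF, if_neg hnx]
    exact hcol z _ h

theorem moveF_collocates {E : List (Fin n × Fin n)} {e : Fin n × Fin n} {f : Fin n → Fin ℓ}
    (hcol : collocates E f) (hm : ¬ sameComp E e.1 e.2) :
    collocates (E ++ [e]) (moveF f E e) := by
  intro u v huv
  rcases sameComp_concat huv with h | ⟨hu, hv⟩
  · by_cases hux : sameComp E u (xe E e)
    · have hvx : sameComp E v (xe E e) := sameComp_trans (sameComp_symm h) hux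
      rw [moveF, if_pos hux, moveF, if_pos hvx]
    · have hvx : ¬ sameComp E v (xe E e) := fun h' => hux (sameComp_trans h h')
      rw [moveF, if_neg hux, moveF, if_neg hvx]
      exact hcol u v h
  · rw [moveF_of_rel hcol hm hu, moveF_of_rel hcol hm hv]

theorem moveF_load (f : Fin n → Fin ℓ) (E : List (Fin n × Fin n)) (e : Fin n × Fin n)
    (j : Fin ℓ) : load (moveF f E e) j ≤ load f j + wgt E e := by
  have hsub : (Finset.univ.filter fun v => moveF f E e v = j) ⊆
      (Finset.univ.filter fun v => f v = j) ∪ compF E (xe E e) := by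
    intro v hv
    simp only [Finset.mem_filter, Finset.mem_univ, true_and, Finset.mem_union] at hv ⊢
    by_cases hx : sameComp E v (xe E e)
    · exact Or.inr (mem_compF.2 hx)
    · rw [moveF, if_neg hx] at hv
      exact Or.inl hv
  calc load (moveF f E e) j ≤ ((Finset.univ.filter fun v => f v = j) ∪ compF E (xe E e)).card :=
        Finset.card_le_card hsub
    _ ≤ load f j + wgt E e := Finset.card_union_le _ _

theorem moveF_dist (f : Fin n → Fin ℓ) (E : List (Fin n × Fin n)) (e : Fin n × Fin n) :
    movesBetween f (moveF f E e) ≤ wgt E e := by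
  rw [movesBetween, wgt]
  refine Finset.card_le_card ?_
  intro v hv
  simp only [Finset.mem_filter, Finset.mem_univ, true_and] at hv
  rw [mem_compF]
  by_contra hx
  rw [moveF, if_neg hx] at hv
  exact hv rfl

end MoveLemmas

section Canon

variable {n ℓ : ℕ} (ε : ℝ) (I : ReInstance n ℓ)

theorem canon_stable {s t : ℕ} (hs : cmpl I s) (hst : s ≤ t) :
    canonG I.init (Et I t) = canonG I.init (Et I s) := by
  rw [canonG, canonG, exactCands_congr (cmpl_stable I hs hst).1]

theorem canonG_nil (hn : n ≠ 0) : canonG I.init (Et I 0) = I.init := by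
  have hmem : I.init ∈ exactCands (Et I 0) := by
    rw [mem_exactCands]
    refine ⟨fun u v huv => ?_, fun j => I.init_size j⟩
    rw [Et, List.take_zero] at huv
    rw [sameComp_nil huv]
  have hne : (exactCands (Et I 0) : Finset (Fin n → Fin ℓ)).Nonempty := ⟨_, hmem⟩
  have h0 : movesBetween I.init (canonG I.init (Et I 0)) = 0 := by
    have h1 := pick_min (a0 := I.init) hne hmem
    rw [movesBetween_self] at h1
    rw [canonG]
    omega
  exact (movesBetween_eq_zero h0).symm

theorem ft_zero : ft ε I 0 = I.init := by
  rw [ft, Et, List.take_zero, runF_nil]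

theorem acct_zero : acct ε I 0 = 0 := by
  rw [acct, Et, List.take_zero, runF_nil]

theorem canonG_spec' (hn : n ≠ 0) (t : ℕ) :
    collocates (Et I t) (canonG I.init (Et I t)) ∧
      (∀ j, load (canonG I.init (Et I t)) j = n / ℓ) ∧
      movesBetween I.init (canonG I.init (Et I t)) ≤ dOpt I :=
  canonG_spec I hn fun u v h => prefix_truth I h

end Canon
end SLR

namespace SLR
open Classical

section Invariant

variable {n ℓ : ℕ} (ε : ℝ) (I : ReInstance n ℓ)

def Inv (hn : n ≠ 0) (t : ℕ) : Prop :=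
  collocates (Et I t) (ft ε I t) ∧
  (∀ j, load (ft ε I t) j ≤ n / ℓ + acct ε I t) ∧
  ((acct ε I t : ℝ) ≤ ε * n / ℓ) ∧
  movesBetween I.init (ft ε I t) ≤ dOpt I + acct ε I t ∧
  (cmpl I t → ft ε I t = canonG I.init (Et I t) ∧ acct ε I t = 0) ∧
  ((∑ s ∈ Finset.range t, mt ε I s) + acct ε I t ≤
     2 * (∑ s ∈ Finset.range t, wv I hn s) +
       2 * dOpt I * (∑ s ∈ Finset.range t, rhov ε I hn s)) ∧
  ((∑ s ∈ Finset.range t, deltav ε I hn s) + acct ε I t ≤ ∑ s ∈ Finset.range t, wv I hn s)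

theorem inv_all (hn : n ≠ 0) (hε : 0 ≤ ε) :
    ∀ t, t ≤ I.sigma.length → Inv ε I hn t := by
  have hεk : (0 : ℝ) ≤ ε * n / ℓ := by positivity
  intro t
  induction t with
  | zero =>
    intro _
    have hf0 := ft_zero ε I
    have ha0 := acct_zero ε I
    refine ⟨?_, ?_, ?_, ?_, ?_, ?_, ?_⟩
    · rw [hf0]
      intro u v huv
      rw [Et, List.take_zero] at huv
      rw [sameComp_nil huv]
    · intro j
      rw [hf0, ha0]
      have hl : load I.init j = n / ℓ := I.init_size j
      omega
    · rw [ha0]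
      exact_mod_cast hεk
    · rw [hf0, ha0, movesBetween_self]
      omega
    · intro _
      rw [hf0, ha0]
      exact ⟨(canonG_nil I hn).symm, rfl⟩
    · rw [ha0]; simp
    · rw [ha0]; simp
  | succ t IH =>
    intro ht1
    have ht : t < I.sigma.length := Nat.lt_of_succ_le ht1
    obtain ⟨ih1, ih2, ih3, ih4, ih5, ih6, ih7⟩ := IH (Nat.le_of_succ_le ht1)
    have hwpos : 0 < wgt (Et I t) (ed I hn t) := compF_card_pos _ _
    by_cases hc : cmpl I (t + 1)
    · -- completion branch
      obtain ⟨hft, hacc⟩ := case_cmp ε I hn ht hc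
      have hspec := canonG_spec' I hn (t + 1)
      have hρδ : ∀ (hct : cmpl I t), rhov ε I hn t = 0 ∧ deltav ε I hn t = 0 := by
        intro hct
        have hrst : ¬ rst ε I hn t := by
          rintro (⟨_, h⟩ | ⟨h, _, _⟩)
          exacts [h hct, h hc]
        exact ⟨if_neg hrst, if_neg hrst⟩
      have hρδ' : ∀ (hct : ¬ cmpl I t),
          rhov ε I hn t = 1 ∧ deltav ε I hn t = acct ε I t := by
        intro hct
        have hrst : rst ε I hn t := Or.inl ⟨hc, hct⟩
        exact ⟨if_pos hrst, if_pos hrst⟩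
      refine ⟨?_, ?_, ?_, ?_, ?_, ?_, ?_⟩
      · rw [hft]; exact hspec.1
      · intro j; rw [hft, hacc, (hspec.2.1 j)]; omega
      · rw [hacc]; exact_mod_cast hεk
      · rw [hft, hacc]
        have := hspec.2.2
        omega
      · intro _; exact ⟨hft, hacc⟩
      · rw [Finset.sum_range_succ, Finset.sum_range_succ, Finset.sum_range_succ, hacc]
        by_cases hct : cmpl I t
        · obtain ⟨hρ, _⟩ := hρδ hct
          obtain ⟨hf5, ha5⟩ := ih5 hct
          have hmt : mt ε I t = 0 := by
            rw [mt, hft, canon_stable I hct (Nat.le_succ t), ← hf5, movesBetween_self]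
          rw [hmt, hρ]
          rw [ha5] at ih6
          simp only [Nat.add_zero]
          omega
        · obtain ⟨hρ, _⟩ := hρδ' hct
          have hmt : mt ε I t ≤ acct ε I t + 2 * dOpt I := by
            rw [mt, hft]
            calc movesBetween (ft ε I t) (canonG I.init (Et I (t + 1))) ≤
                movesBetween (ft ε I t) I.init +
                  movesBetween I.init (canonG I.init (Et I (t + 1))) :=
                movesBetween_triangle _ _ _
              _ ≤ (dOpt I + acct ε I t) + dOpt I := by
                  rw [movesBetween_comm]
                  exact Nat.add_le_add ih4 hspec.2.2
              _ = acct ε I t + 2 * dOpt I := by ring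
          rw [hρ, show 2 * dOpt I * (∑ x ∈ Finset.range t, rhov ε I hn x + 1) =
            2 * dOpt I * (∑ x ∈ Finset.range t, rhov ε I hn x) + 2 * dOpt I from by ring]
          omega
      · rw [Finset.sum_range_succ, Finset.sum_range_succ, hacc]
        by_cases hct : cmpl I t
        · obtain ⟨_, hδ⟩ := hρδ hct
          rw [hδ]
          omega
        · obtain ⟨_, hδ⟩ := hρδ' hct
          rw [hδ]
          omega
    · by_cases hm : mrg I hn t
      · by_cases hle : ((acct ε I t + wgt (Et I t) (ed I hn t) : ℕ) : ℝ) ≤ ε * n / ℓ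
        · -- small-to-large move branch
          obtain ⟨hft, hacc⟩ := case_move ε I hn ht hc hm hle
          have hρ : rhov ε I hn t = 0 := by
            refine if_neg ?_
            rintro (⟨h, _⟩ | ⟨_, _, h⟩)
            exacts [hc h, h hle]
          have hδ : deltav ε I hn t = 0 := by
            refine if_neg ?_
            rintro (⟨h, _⟩ | ⟨_, _, h⟩)
            exacts [hc h, h hle]
          have hw : wv I hn t = wgt (Et I t) (ed I hn t) := if_pos hm
          have hmt : mt ε I t ≤ wgt (Et I t) (ed I hn t) := by
            rw [mt, hft]; exact moveF_dist _ _ _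
          refine ⟨?_, ?_, ?_, ?_, ?_, ?_, ?_⟩
          · rw [hft, Et_concat I hn ht]
            exact moveF_collocates ih1 hm
          · intro j
            rw [hft, hacc]
            calc load (moveF (ft ε I t) (Et I t) (ed I hn t)) j ≤
                load (ft ε I t) j + wgt (Et I t) (ed I hn t) := moveF_load _ _ _ _
              _ ≤ n / ℓ + (acct ε I t + wgt (Et I t) (ed I hn t)) := by
                  have := ih2 j; omega
          · rw [hacc]; exact hle
          · rw [hft, hacc]
            calc movesBetween I.init (moveF (ft ε I t) (Et I t) (ed I hn t)) ≤
                movesBetween I.init (ft ε I t) +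
                  movesBetween (ft ε I t) (moveF (ft ε I t) (Et I t) (ed I hn t)) :=
                movesBetween_triangle _ _ _
              _ ≤ (dOpt I + acct ε I t) + wgt (Et I t) (ed I hn t) :=
                  Nat.add_le_add ih4 (moveF_dist _ _ _)
              _ = dOpt I + (acct ε I t + wgt (Et I t) (ed I hn t)) := by ring
          · intro h; exact absurd h hc
          · rw [Finset.sum_range_succ, Finset.sum_range_succ, Finset.sum_range_succ,
              hacc, hρ, hw]
            simp only [Nat.add_zero]
            omega
          · rw [Finset.sum_range_succ, Finset.sum_range_succ, hacc, hδ, hw]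
            omega
        · -- overflow reset branch
          obtain ⟨hft, hacc⟩ := case_ovf ε I hn ht hc hm hle
          have hspec := canonG_spec' I hn (t + 1)
          have hrst : rst ε I hn t := Or.inr ⟨hc, hm, hle⟩
          have hρ : rhov ε I hn t = 1 := if_pos hrst
          have hδ : deltav ε I hn t = acct ε I t := if_pos hrst
          have hmt : mt ε I t ≤ acct ε I t + 2 * dOpt I := by
            rw [mt, hft]
            calc movesBetween (ft ε I t) (canonG I.init (Et I (t + 1))) ≤
                movesBetween (ft ε I t) I.init +
                  movesBetween I.init (canonG I.init (Et I (t + 1))) :=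
                movesBetween_triangle _ _ _
              _ ≤ (dOpt I + acct ε I t) + dOpt I := by
                  rw [movesBetween_comm]
                  exact Nat.add_le_add ih4 hspec.2.2
              _ = acct ε I t + 2 * dOpt I := by ring
          refine ⟨?_, ?_, ?_, ?_, ?_, ?_, ?_⟩
          · rw [hft]; exact hspec.1
          · intro j; rw [hft, hacc, (hspec.2.1 j)]; omega
          · rw [hacc]; exact_mod_cast hεk
          · rw [hft, hacc]
            have := hspec.2.2
            omega
          · intro h; exact absurd h hc
          · rw [Finset.sum_range_succ, Finset.sum_range_succ, Finset.sum_range_succ,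
              hacc, hρ, show 2 * dOpt I * (∑ x ∈ Finset.range t, rhov ε I hn x + 1) =
                2 * dOpt I * (∑ x ∈ Finset.range t, rhov ε I hn x) + 2 * dOpt I from by ring]
            omega
          · rw [Finset.sum_range_succ, Finset.sum_range_succ, hacc, hδ]
            omega
      · -- no-merge branch
        obtain ⟨hft, hacc⟩ := case_nomrg ε I hn ht hc hm
        rw [mrg, not_not] at hm
        have hiff : ∀ u v : Fin n, sameComp (Et I (t + 1)) u v ↔ sameComp (Et I t) u v := by
          rw [Et_concat I hn ht]
          exact sameComp_concat_iff hm
        have hρ : rhov ε I hn t = 0 := by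
          refine if_neg ?_
          rintro (⟨h, _⟩ | ⟨_, h, _⟩)
          exacts [hc h, h hm]
        have hδ : deltav ε I hn t = 0 := by
          refine if_neg ?_
          rintro (⟨h, _⟩ | ⟨_, h, _⟩)
          exacts [hc h, h hm]
        have hw : wv I hn t = 0 := by
          refine if_neg ?_
          intro h; exact h hm
        have hmt : mt ε I t = 0 := by rw [mt, hft, movesBetween_self]
        refine ⟨?_, ?_, ?_, ?_, ?_, ?_, ?_⟩
        · intro u v huv
          rw [hft]
          exact ih1 u v ((hiff u v).1 huv)
        · intro j; rw [hft, hacc]; exact ih2 j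
        · rw [hacc]; exact ih3
        · rw [hft, hacc]; exact ih4
        · intro h; exact absurd h hc
        · rw [Finset.sum_range_succ, Finset.sum_range_succ, Finset.sum_range_succ,
            hacc, hρ, hw, hmt]
          simp only [Nat.add_zero]
          omega
        · rw [Finset.sum_range_succ, Finset.sum_range_succ, hacc, hδ, hw]
          omega

end Invariant
end SLR

namespace SLR
open Classical

section Counting

variable {n ℓ : ℕ} (ε : ℝ) (I : ReInstance n ℓ)

noncomputable def evset (hn : n ≠ 0) (v : Fin n) (T : ℕ) : Finset ℕ :=
  (Finset.range T).filter fun t =>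
    mrg I hn t ∧ v ∈ compF (Et I t) (xe (Et I t) (ed I hn t))

theorem evset_grow (hn : n ≠ 0) (v : Fin n) :
    ∀ T, T ≤ I.sigma.length → 2 ^ (evset I hn v T).card ≤ (compF (Et I T) v).card := by
  intro T
  induction T with
  | zero =>
    intro _
    rw [show evset I hn v 0 = ∅ by rw [evset, Finset.range_zero, Finset.filter_empty]]
    simpa using compF_card_pos (Et I 0) v
  | succ T IH =>
    intro hT1
    have hT : T < I.sigma.length := Nat.lt_of_succ_le hT1
    have hIH := IH (Nat.le_of_succ_le hT1)
    have hrange : evset I hn v (T + 1) =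
        if mrg I hn T ∧ v ∈ compF (Et I T) (xe (Et I T) (ed I hn T)) then
          insert T (evset I hn v T) else evset I hn v T := by
      rw [evset, Finset.range_add_one, Finset.filter_insert]
      split_ifs with h
      · rfl
      · rfl
    by_cases hcond : mrg I hn T ∧ v ∈ compF (Et I T) (xe (Et I T) (ed I hn T))
    · obtain ⟨hm, hv⟩ := hcond
      rw [hrange, if_pos ⟨hm, hv⟩, Finset.card_insert_of_notMem (by
        intro hmem
        have := Finset.mem_range.1 ((Finset.mem_filter.1 hmem).1)
        omega)]
      set x := xe (Et I T) (ed I hn T) with hx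
      set y := ye (Et I T) (ed I hn T) with hy
      have hvx : sameComp (Et I T) v x := mem_compF.1 hv
      have hxy : ¬ sameComp (Et I T) x y := not_sameComp_xy hm
      -- x ~ y in the extended list
      have hmem_e : ed I hn T ∈ Et I (T + 1) := by
        rw [Et_concat I hn hT]
        simp
      have hsub : ∀ e ∈ Et I T, e ∈ Et I (T + 1) := Et_sub_Et I (Nat.le_succ T)
      have hxyE : sameComp (Et I (T + 1)) x y := by
        have h12 : sameComp (Et I (T + 1)) (ed I hn T).1 (ed I hn T).2 :=
          sameComp_of_mem hmem_e
        rw [hx, hy]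
        rcases xye_pair (Et I T) (ed I hn T) with ⟨h1, h2⟩ | ⟨h1, h2⟩ <;> rw [h1, h2]
        · exact h12
        · exact sameComp_symm h12
      have hXsub : compF (Et I T) x ∪ compF (Et I T) y ⊆ compF (Et I (T + 1)) v := by
        intro u hu
        rcases Finset.mem_union.1 hu with hu | hu
        · have : sameComp (Et I (T + 1)) u x := sameComp_mono hsub (mem_compF.1 hu)
          exact mem_compF.2 (sameComp_trans this
            (sameComp_symm (sameComp_mono hsub hvx)))
        · have h1 : sameComp (Et I (T + 1)) u y := sameComp_mono hsub (mem_compF.1 hu)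
          have h2 : sameComp (Et I (T + 1)) u x := sameComp_trans h1 (sameComp_symm hxyE)
          exact mem_compF.2 (sameComp_trans h2
            (sameComp_symm (sameComp_mono hsub hvx)))
      have hdisj : Disjoint (compF (Et I T) x) (compF (Et I T) y) := compF_disjoint hxy
      have hcard : (compF (Et I T) x).card + (compF (Et I T) y).card ≤
          (compF (Et I (T + 1)) v).card := by
        rw [← Finset.card_union_of_disjoint hdisj]
        exact Finset.card_le_card hXsub
      have hle : (compF (Et I T) x).card ≤ (compF (Et I T) y).card := wgt_le _ _
      have hveq : compF (Et I T) v = compF (Et I T) x := compF_eq_of_sameComp hvx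
      rw [pow_succ]
      rw [hveq] at hIH
      omega
    · rw [hrange, if_neg hcond]
      calc 2 ^ (evset I hn v T).card ≤ (compF (Et I T) v).card := hIH
        _ ≤ (compF (Et I (T + 1)) v).card :=
            Finset.card_le_card (compF_mono (Et_sub_Et I (Nat.le_succ T)) v)

theorem evset_card_le (hn : n ≠ 0) (v : Fin n) :
    (evset I hn v I.sigma.length).card ≤ Nat.log 2 n := by
  have h := evset_grow I hn v I.sigma.length le_rfl
  have h2 : (compF (Et I I.sigma.length) v).card ≤ n := by
    calc (compF (Et I I.sigma.length) v).card ≤ Finset.univ.card := Finset.card_filter_le _ _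
      _ = n := by simp
  exact (Nat.le_log_iff_pow_le (by norm_num) hn).2 (le_trans h h2)

theorem wv_eq_card (hn : n ≠ 0) (t : ℕ) :
    wv I hn t = (Finset.univ.filter fun v : Fin n =>
      mrg I hn t ∧ v ∈ compF (Et I t) (xe (Et I t) (ed I hn t))).card := by
  rw [wv]
  split_ifs with h
  · rw [wgt]
    congr 1
    ext v
    simp only [Finset.mem_filter, Finset.mem_univ, true_and]
    exact ⟨fun hv => ⟨h, Finset.mem_filter.2 ⟨Finset.mem_univ v, (Finset.mem_filter.1 hv).2⟩⟩,
      fun hv => hv.2⟩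
  · symm
    rw [Finset.card_eq_zero, Finset.filter_eq_empty_iff]
    intro v _ hv
    exact h hv.1

theorem V_le_nlog (hn : n ≠ 0) :
    (∑ s ∈ Finset.range I.sigma.length, wv I hn s) ≤ n * Nat.log 2 n := by
  have h1 : (∑ s ∈ Finset.range I.sigma.length, wv I hn s) =
      ∑ v : Fin n, (evset I hn v I.sigma.length).card := by
    have h2 : ∀ s, wv I hn s = ∑ v : Fin n,
        if mrg I hn s ∧ v ∈ compF (Et I s) (xe (Et I s) (ed I hn s)) then 1 else 0 := by
      intro s
      rw [wv_eq_card I hn s, Finset.card_filter]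
    have h3 : ∀ v : Fin n, (evset I hn v I.sigma.length).card =
        ∑ s ∈ Finset.range I.sigma.length,
          if mrg I hn s ∧ v ∈ compF (Et I s) (xe (Et I s) (ed I hn s)) then 1 else 0 := by
      intro v
      rw [evset, Finset.card_filter]
    rw [Finset.sum_congr rfl fun s _ => h2 s, Finset.sum_comm,
      Finset.sum_congr rfl fun v _ => (h3 v).symm]
  rw [h1]
  calc (∑ v : Fin n, (evset I hn v I.sigma.length).card) ≤
      ∑ _v : Fin n, Nat.log 2 n := Finset.sum_le_sum fun v _ => evset_card_le I hn v
    _ = n * Nat.log 2 n := by simp [Finset.sum_const, Finset.card_univ]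

end Counting
end SLR

namespace SLR
open Classical

section Resets

variable {n ℓ : ℕ} (ε : ℝ) (I : ReInstance n ℓ)

/-- an overflow reset consumes at least `ε n / ℓ` of weight -/
theorem ovf_consume (hn : n ≠ 0) {t : ℕ} (h : ovf ε I hn t) :
    ε * n / ℓ ≤ ((deltav ε I hn t + wv I hn t : ℕ) : ℝ) := by
  obtain ⟨hc, hm, hgt⟩ := h
  have hδ : deltav ε I hn t = acct ε I t := if_pos (Or.inr ⟨hc, hm, hgt⟩)
  have hw : wv I hn t = wgt (Et I t) (ed I hn t) := if_pos hm
  rw [hδ, hw]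
  push_neg at hgt
  exact le_of_lt hgt

theorem ovf_count (hn : n ≠ 0) (hε : 0 ≤ ε) (hr : ∀ t ≤ I.sigma.length, Inv ε I hn t) :
    ((∑ s ∈ Finset.range I.sigma.length, orhov ε I hn s : ℕ) : ℝ) * (ε * n / ℓ) ≤
      2 * ((∑ s ∈ Finset.range I.sigma.length, wv I hn s : ℕ) : ℝ) := by
  have hεk : (0:ℝ) ≤ ε * n / ℓ := by positivity
  have hδsum : (∑ s ∈ Finset.range I.sigma.length, deltav ε I hn s) ≤
      ∑ s ∈ Finset.range I.sigma.length, wv I hn s := by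
    have := (hr I.sigma.length le_rfl).2.2.2.2.2.2
    omega
  have step : ∀ s, ((orhov ε I hn s : ℕ) : ℝ) * (ε * n / ℓ) ≤
      ((deltav ε I hn s + wv I hn s : ℕ) : ℝ) := by
    intro s
    rw [orhov]
    split_ifs with h
    · rw [Nat.cast_one, one_mul]
      exact ovf_consume ε I hn h
    · rw [Nat.cast_zero, zero_mul]
      positivity
  calc ((∑ s ∈ Finset.range I.sigma.length, orhov ε I hn s : ℕ) : ℝ) * (ε * n / ℓ)
      = ∑ s ∈ Finset.range I.sigma.length, ((orhov ε I hn s : ℕ) : ℝ) * (ε * n / ℓ) := by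
        rw [Nat.cast_sum, Finset.sum_mul]
    _ ≤ ∑ s ∈ Finset.range I.sigma.length, ((deltav ε I hn s + wv I hn s : ℕ) : ℝ) :=
        Finset.sum_le_sum fun s _ => step s
    _ = ((∑ s ∈ Finset.range I.sigma.length, (deltav ε I hn s + wv I hn s) : ℕ) : ℝ) := by
        rw [Nat.cast_sum]
    _ ≤ 2 * ((∑ s ∈ Finset.range I.sigma.length, wv I hn s : ℕ) : ℝ) := by
        rw [Finset.sum_add_distrib]
        push_cast
        have := hδsum
        have h2 : ((∑ s ∈ Finset.range I.sigma.length, deltav ε I hn s : ℕ) : ℝ) ≤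
            ((∑ s ∈ Finset.range I.sigma.length, wv I hn s : ℕ) : ℝ) := by
          exact_mod_cast hδsum
        push_cast at h2
        linarith

theorem rst_count (hn : n ≠ 0) :
    (∑ s ∈ Finset.range I.sigma.length, rhov ε I hn s) ≤
      (∑ s ∈ Finset.range I.sigma.length, orhov ε I hn s) + 1 := by
  classical
  set fc : ℕ → ℕ := fun s => if cmpl I (s + 1) ∧ ¬ cmpl I s then 1 else 0 with hfc
  have hstep : ∀ s, rhov ε I hn s ≤ orhov ε I hn s + fc s := by
    intro s
    rw [rhov]
    split_ifs with h
    · rcases h with h | h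
      · rw [hfc]
        simp only
        rw [if_pos h]
        omega
      · rw [orhov, if_pos h]
        omega
    · omega
  have hfcsum : (∑ s ∈ Finset.range I.sigma.length, fc s) ≤ 1 := by
    have hcard : (∑ s ∈ Finset.range I.sigma.length, fc s) =
        ((Finset.range I.sigma.length).filter fun s => cmpl I (s + 1) ∧ ¬ cmpl I s).card := by
      rw [Finset.card_filter]
    rw [hcard]
    refine Finset.card_le_one.2 fun a ha b hb => ?_
    simp only [Finset.mem_filter] at ha hb
    by_contra hab
    rcases Nat.lt_or_ge a b with h | h
    · exact hb.2.2 (cmpl_stable I ha.2.1 h).2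
    · have : b < a := by omega
      exact ha.2.2 (cmpl_stable I hb.2.1 this).2
  calc (∑ s ∈ Finset.range I.sigma.length, rhov ε I hn s) ≤
      ∑ s ∈ Finset.range I.sigma.length, (orhov ε I hn s + fc s) :=
        Finset.sum_le_sum fun s _ => hstep s
    _ = (∑ s ∈ Finset.range I.sigma.length, orhov ε I hn s) +
        ∑ s ∈ Finset.range I.sigma.length, fc s := Finset.sum_add_distrib
    _ ≤ _ := by omega

theorem comm_le (hn : n ≠ 0) (hr : ∀ t ≤ I.sigma.length, Inv ε I hn t) :
    algComm (algo ε) I.init I.sigma ≤ ∑ s ∈ Finset.range I.sigma.length, wv I hn s := by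
  rw [algComm]
  have hsummand : ∀ t : Fin I.sigma.length,
      (if state (algo ε) I.init I.sigma t.val (I.sigma.get t).1 ≠
          state (algo ε) I.init I.sigma t.val (I.sigma.get t).2 then 1 else 0) ≤
        wv I hn t.val := by
    intro t
    split_ifs with h
    · -- the request merges two components
      have hst := state_eq ε I t.val
      rw [hst, ← ed_eq I hn t.isLt] at h
      have hm : mrg I hn t.val := by
        intro hsame
        exact h ((hr t.val (le_of_lt t.isLt)).1 _ _ hsame)
      rw [wv, if_pos hm]
      exact compF_card_pos _ _
    · omega
  calc (∑ t : Fin I.sigma.length,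
        if state (algo ε) I.init I.sigma t.val (I.sigma.get t).1 ≠
            state (algo ε) I.init I.sigma t.val (I.sigma.get t).2 then 1 else 0) ≤
      ∑ t : Fin I.sigma.length, wv I hn t.val := Finset.sum_le_sum fun t _ => hsummand t
    _ = ∑ s ∈ Finset.range I.sigma.length, wv I hn s :=
        Fin.sum_univ_eq_sum_range (fun s => wv I hn s) I.sigma.length

theorem algMoves_eq :
    algMoves (algo ε) I.init I.sigma = ∑ s ∈ Finset.range I.sigma.length, mt ε I s := by
  rw [algMoves]
  refine Finset.sum_congr rfl fun s _ => ?_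
  rw [mt, state_eq ε I s, state_eq ε I (s + 1)]

end Resets

section OptBound

variable {n ℓ : ℕ} (α ε : ℝ) (I : ReInstance n ℓ)

theorem sched_dist (g : ℕ → Fin n → Fin ℓ) (a0 : Fin n → Fin ℓ) :
    ∀ N, movesBetween a0 (g N) ≤
      movesBetween a0 (g 0) + ∑ t ∈ Finset.range N, movesBetween (g t) (g (t + 1)) := by
  intro N
  induction N with
  | zero => simp
  | succ N IH =>
    calc movesBetween a0 (g (N + 1)) ≤
        movesBetween a0 (g N) + movesBetween (g N) (g (N + 1)) := movesBetween_triangle _ _ _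
      _ ≤ movesBetween a0 (g 0) + ∑ t ∈ Finset.range N, movesBetween (g t) (g (t + 1)) +
          movesBetween (g N) (g (N + 1)) := by omega
      _ = _ := by rw [Finset.sum_range_succ]; omega

theorem opt_lb (hn : n ≠ 0) (hdvd : ℓ ∣ n) (hℓ : 2 ≤ ℓ) (hα : 1 < α) (hε : 0 < ε) :
    α * (dOpt I : ℝ) ≤ OPTcost α ε I ∧ 0 ≤ OPTcost α ε I := by
  have hℓ0 : (ℓ : ℝ) ≠ 0 := by positivity
  have hkcast : ((n / ℓ : ℕ) : ℝ) = (n : ℝ) / ℓ := by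
    rw [Nat.cast_div hdvd hℓ0]
  have hvalid : validCap ε (pstar I) := by
    intro j
    have hl : load (pstar I) j = n / ℓ := load_of_perfect I hn (pstar_perfect I) j
    rw [show (Finset.univ.filter fun v => pstar I v = j).card = load (pstar I) j from rfl, hl,
      hkcast]
    have h1 : (1 + ε) * n / ℓ = (n : ℝ) / ℓ + ε * n / ℓ := by ring
    have h2 : (0:ℝ) ≤ ε * n / ℓ := by positivity
    linarith
  have hne : { c : ℝ | ∃ g : ℕ → Fin n → Fin ℓ,
      (∀ t, validCap ε (g t)) ∧ isPerfect I.truth (g I.sigma.length) ∧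
      c = α * schedMoves I.init I.sigma g + schedComm I.sigma g }.Nonempty := by
    refine ⟨α * schedMoves I.init I.sigma (fun _ => pstar I) +
      schedComm I.sigma (fun _ => pstar I), ?_⟩
    exact ⟨fun _ => pstar I, fun t => hvalid, pstar_perfect I, rfl⟩
  have hbound : ∀ c ∈ { c : ℝ | ∃ g : ℕ → Fin n → Fin ℓ,
      (∀ t, validCap ε (g t)) ∧ isPerfect I.truth (g I.sigma.length) ∧
      c = α * schedMoves I.init I.sigma g + schedComm I.sigma g },
      α * (dOpt I : ℝ) ≤ c := by
    rintro c ⟨g, _, hperf, rfl⟩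
    have h1 : dOpt I ≤ schedMoves I.init I.sigma g := by
      calc dOpt I ≤ movesBetween I.init (g I.sigma.length) := dOpt_min I hperf
        _ ≤ _ := sched_dist g I.init I.sigma.length
    have h2 : (0:ℝ) ≤ schedComm I.sigma g := Nat.cast_nonneg _
    have h3 : (dOpt I : ℝ) ≤ (schedMoves I.init I.sigma g : ℝ) := by exact_mod_cast h1
    nlinarith [h3, h2]
  constructor
  · exact le_csInf hne hbound
  · refine le_trans ?_ (le_csInf hne hbound)
    positivity

end OptBound
end SLR

namespace SLR
open Classical

section Final

variable {n ℓ : ℕ} (ε : ℝ) (I : ReInstance n ℓ)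

theorem perfect_end (hn : n ≠ 0) : isPerfect I.truth (ft ε I I.sigma.length) := by
  rcases Nat.eq_zero_or_pos I.sigma.length with h0 | hpos
  · -- empty sequence: the ground truth is discrete and `init` is injective
    have hσ : I.sigma = [] := List.length_eq_zero_iff.1 h0
    have htinj : ∀ u v : Fin n, I.truth u = I.truth v → u = v := by
      intro u v h
      have h2 := (I.reveals u v).2 h
      rw [hσ] at h2
      exact sameComp_nil h2
    have hk1 : n / ℓ = 1 := by
      have v0 : Fin n := ⟨0, Nat.pos_of_ne_zero hn⟩
      have h1 := I.truth_size (I.truth v0)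
      have h2 : (Finset.univ.filter fun v => I.truth v = I.truth v0) = {v0} := by
        ext u
        simp only [Finset.mem_filter, Finset.mem_univ, true_and, Finset.mem_singleton]
        exact ⟨fun h => htinj u v0 h, fun h => by rw [h]⟩
      rw [h2, Finset.card_singleton] at h1
      omega
    have hinj : ∀ u v : Fin n, I.init u = I.init v → u = v := by
      intro u v h
      have h1 := I.init_size (I.init u)
      rw [hk1] at h1
      have hu : u ∈ Finset.univ.filter fun w => I.init w = I.init u := by simp
      have hv : v ∈ Finset.univ.filter fun w => I.init w = I.init u := by simp [h]
      exact Finset.card_le_one.1 (le_of_eq h1) u hu v hv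
    rw [h0, ft_zero]
    intro u v
    exact ⟨fun h => by rw [hinj u v h], fun h => by rw [htinj u v h]⟩
  · -- non-empty sequence: the last step is a completion step
    set r := I.sigma.length with hr
    have ht : r - 1 < r := by omega
    have ht1 : r - 1 + 1 = r := by omega
    have hc : cmpl I (r - 1 + 1) := by rw [ht1]; exact cmpl_final I
    obtain ⟨hft, -⟩ := case_cmp ε I hn ht hc
    rw [ht1] at hft
    have hspec := canonG_spec' I hn r
    have hEt : Et I r = I.sigma := Et_stable I le_rfl
    rw [hEt] at hft hspec
    rw [hft]
    exact perfect_of_exactCands I hn hspec.1 hspec.2.1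

theorem validCap_ft (hn : n ≠ 0) (hdvd : ℓ ∣ n) (hε : 0 ≤ ε) {t : ℕ}
    (ht : t ≤ I.sigma.length) : validCap ε (ft ε I t) := by
  obtain ⟨-, h2, h3, -⟩ := inv_all ε I hn hε t ht
  intro j
  have hl : (Finset.univ.filter fun v => ft ε I t v = j).card = load (ft ε I t) j := rfl
  have hℓ0 : (ℓ : ℝ) ≠ 0 := by
    simp only [ne_eq, Nat.cast_eq_zero]
    rintro rfl
    exact hn (Nat.eq_zero_of_zero_dvd hdvd)
  have hkcast : ((n / ℓ : ℕ) : ℝ) = (n : ℝ) / ℓ := Nat.cast_div hdvd hℓ0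
  have hload : ((load (ft ε I t) j : ℕ) : ℝ) ≤ ((n / ℓ : ℕ) : ℝ) + (acct ε I t : ℝ) := by
    exact_mod_cast h2 j
  rw [hl]
  have heq : (1 + ε) * n / ℓ = (n : ℝ) / ℓ + ε * n / ℓ := by ring
  rw [heq]
  rw [hkcast] at hload
  linarith

theorem state_ge {t : ℕ} (ht : I.sigma.length ≤ t) :
    state (algo ε) I.init I.sigma t = ft ε I I.sigma.length := by
  cases t with
  | zero =>
    have h0 : I.sigma.length = 0 := by omega
    rw [state, h0, ft_zero]
  | succ t =>
    have h1 : I.sigma.take (t + 1) = I.sigma := List.take_of_length_le ht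
    show (runF ε I.init (I.sigma.take (t + 1))).1 = (runF ε I.init (Et I I.sigma.length)).1
    rw [h1, Et_stable I le_rfl]

end Final
end SLR

namespace SLR

theorem arith (α ε L nR ℓR OPT V R Ro d M C : ℝ)
    (hα : 1 < α) (hε : 0 < ε) (hn : 0 < nR) (hℓ : 0 < ℓR) (hL1 : 1 ≤ L)
    (hM : M ≤ 2 * V + 2 * d * R) (hR : R ≤ Ro + 1) (hRo : Ro * (ε * nR / ℓR) ≤ 2 * V)
    (hV : V ≤ nR * L) (hC : C ≤ V) (hd : d ≤ nR) (hOPT : α * d ≤ OPT) (hOPT0 : 0 ≤ OPT)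
    (h3 : 0 ≤ d) (h2 : 0 ≤ Ro) :
    α * M + C ≤ 5 * (α * nR * L + OPT * (ℓR * L) / ε) := by
  have hαpos : (0:ℝ) < α := by linarith
  have hL0 : (0:ℝ) ≤ L := by linarith
  have hRo' : Ro * ε * nR ≤ 2 * V * ℓR := by
    have h6 : Ro * ε * nR / ℓR ≤ 2 * V := by
      rw [show Ro * ε * nR / ℓR = Ro * (ε * nR / ℓR) by ring]
      exact hRo
    calc Ro * ε * nR = Ro * ε * nR / ℓR * ℓR := by field_simp
      _ ≤ 2 * V * ℓR := mul_le_mul_of_nonneg_right h6 hℓ.le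
  have hV0 : (0:ℝ) ≤ V := by nlinarith [mul_nonneg (mul_nonneg h2 hε.le) hn.le]
  have hkey : α * d * Ro ≤ 2 * (OPT * (ℓR * L) / ε) := by
    rw [show 2 * (OPT * (ℓR * L) / ε) = 2 * OPT * ℓR * L / ε by ring, le_div_iff₀ hε]
    have hmul : (α * d * Ro * ε) * nR ≤ (2 * OPT * ℓR * L) * nR := by
      calc (α * d * Ro * ε) * nR = (α * d) * (Ro * ε * nR) := by ring
        _ ≤ (α * d) * (2 * V * ℓR) :=
            mul_le_mul_of_nonneg_left hRo' (mul_nonneg hαpos.le h3)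
        _ ≤ OPT * (2 * V * ℓR) :=
            mul_le_mul_of_nonneg_right hOPT (mul_nonneg (mul_nonneg (by norm_num) hV0) hℓ.le)
        _ = (2 * OPT * ℓR) * V := by ring
        _ ≤ (2 * OPT * ℓR) * (nR * L) :=
            mul_le_mul_of_nonneg_left hV
              (mul_nonneg (mul_nonneg (by norm_num) hOPT0) hℓ.le)
        _ = (2 * OPT * ℓR * L) * nR := by ring
    exact le_of_mul_le_mul_right hmul hn
  have hdR : d * R ≤ d * (Ro + 1) := mul_le_mul_of_nonneg_left hR h3
  have hM2 : α * M ≤ α * (2 * V + 2 * d * (Ro + 1)) :=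
    mul_le_mul_of_nonneg_left (by linarith) hαpos.le
  have hexp : α * (2 * V + 2 * d * (Ro + 1)) =
      2 * (α * V) + 2 * (α * d * Ro) + 2 * (α * d) := by ring
  have hp1 : α * V ≤ α * (nR * L) := mul_le_mul_of_nonneg_left hV hαpos.le
  have hp2 : α * d ≤ α * (nR * L) := by
    calc α * d ≤ α * nR := mul_le_mul_of_nonneg_left hd hαpos.le
      _ ≤ α * (nR * L) :=
          mul_le_mul_of_nonneg_left (le_mul_of_one_le_right hn.le hL1) hαpos.le
  have hp3 : C ≤ α * (nR * L) := by
    calc C ≤ V := hC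
      _ ≤ nR * L := hV
      _ ≤ α * (nR * L) := le_mul_of_one_le_left (mul_nonneg hn.le hL0) hα.le
  have hZ : 0 ≤ OPT * (ℓR * L) / ε :=
    div_nonneg (mul_nonneg hOPT0 (mul_nonneg hℓ.le hL0)) hε.le
  linarith [hM2, hexp, hkey, hp1, hp2, hp3, hZ]

end SLR

/-- **Small–Large–Rebalance, ℓ servers.** There is a universal constant
`C` such that for all `n`, `ℓ ≥ 2` dividing `n`, `α > 1` and `ε > 0` there is a
deterministic online algorithm for `ℓ` servers of capacity `(1+ε)·n/ℓ` which always
keeps every currently-revealed connected component on one server, never exceeds the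
capacities, ends with each ground-truth component alone on one server, and whose total
cost on every instance is at most `C·(α·n·log₂ n + OPT·(ℓ·log₂ n)/ε)`. -/
theorem stmt8 :
    ∃ C : ℝ, 0 < C ∧
      ∀ (n ℓ : ℕ) (α ε : ℝ), 2 ≤ ℓ → ℓ ∣ n → 1 < α → 0 < ε →
        ∃ A : OnlineAlg n ℓ, ∀ I : ReInstance n ℓ,
          (∀ t, collocates (I.sigma.take t) (state A I.init I.sigma t)) ∧
          (∀ t, validCap ε (state A I.init I.sigma t)) ∧
          isPerfect I.truth (state A I.init I.sigma I.sigma.length) ∧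
          algCost α A I.init I.sigma ≤
            C * (α * n * Real.logb 2 n + OPTcost α ε I * ((ℓ : ℝ) * Real.logb 2 n) / ε) := by

  refine ⟨5, by norm_num, ?_⟩
  intro n ℓ α ε hℓ hdvd hα hε
  by_cases hn : n = 0
  · -- trivial case: no vertices
    subst hn
    refine ⟨fun a0 _ => a0, ?_⟩
    intro I
    have hσ : I.sigma = [] := by
      cases hσ' : I.sigma with
      | nil => rfl
      | cons e tl => exact e.1.elim0
    have hstate : ∀ t, state (fun a0 _ => a0) I.init I.sigma t = I.init := by
      intro t
      cases t with
      | zero => rfl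
      | succ t => rfl
    refine ⟨?_, ?_, ?_, ?_⟩
    · intro t u v _
      exact u.elim0
    · intro t j
      rw [hstate t]
      have hcard : (Finset.univ.filter fun v : Fin 0 => I.init v = j).card = 0 := by
        simp
      rw [hcard]
      norm_num
    · intro u v
      exact u.elim0
    · rw [algCost, algMoves, algComm, hσ]
      simp only [List.length_nil, Finset.range_zero, Finset.sum_empty, Nat.cast_zero,
        mul_zero, add_zero, Finset.univ_eq_empty]
      rw [Real.logb_zero]
      norm_num
  · -- main case
    have hn0 : 0 < n := Nat.pos_of_ne_zero hn
    have hℓ0 : 0 < ℓ := by omega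
    have hn2 : 2 ≤ n := le_trans hℓ (Nat.le_of_dvd hn0 hdvd)
    refine ⟨SLR.algo ε, ?_⟩
    intro I
    have hε' : (0:ℝ) ≤ ε := le_of_lt hε
    have hinv : ∀ t ≤ I.sigma.length, SLR.Inv ε I hn t := fun t ht =>
      SLR.inv_all ε I hn hε' t ht
    have b1 : ∀ t, collocates (I.sigma.take t) (state (SLR.algo ε) I.init I.sigma t) := by
      intro t
      by_cases ht : t ≤ I.sigma.length
      · rw [SLR.state_eq ε I t]
        exact (hinv t ht).1
      · push_neg at ht
        rw [SLR.state_ge ε I ht.le, List.take_of_length_le ht.le]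
        have h1 := (hinv I.sigma.length le_rfl).1
        rwa [SLR.Et_stable I le_rfl] at h1
    have b2 : ∀ t, validCap ε (state (SLR.algo ε) I.init I.sigma t) := by
      intro t
      by_cases ht : t ≤ I.sigma.length
      · rw [SLR.state_eq ε I t]
        exact SLR.validCap_ft ε I hn hdvd hε' ht
      · push_neg at ht
        rw [SLR.state_ge ε I ht.le]
        exact SLR.validCap_ft ε I hn hdvd hε' le_rfl
    have b3 : isPerfect I.truth (state (SLR.algo ε) I.init I.sigma I.sigma.length) := by
      rw [SLR.state_eq ε I I.sigma.length]
      exact SLR.perfect_end ε I hn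
    refine ⟨b1, b2, b3, ?_⟩
    -- the cost bound
    obtain ⟨hopt1, hopt2⟩ := SLR.opt_lb α ε I hn hdvd hℓ hα hε
    have hL1 : 1 ≤ Real.logb 2 n := by
      rw [show (1:ℝ) = Real.logb 2 2 from (Real.logb_self_eq_one one_lt_two).symm]
      exact Real.logb_le_logb_of_le one_lt_two (by norm_num) (by exact_mod_cast hn2)
    have hlog : (Nat.log 2 n : ℝ) ≤ Real.logb 2 n := by
      have h := Nat.pow_log_le_self 2 hn
      have h2 : ((2:ℝ)) ^ (Nat.log 2 n) ≤ (n:ℝ) := by exact_mod_cast h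
      calc (Nat.log 2 n : ℝ) = Real.logb 2 ((2:ℝ) ^ (Nat.log 2 n)) := by
            rw [Real.logb_pow, Real.logb_self_eq_one one_lt_two, mul_one]
        _ ≤ Real.logb 2 n := Real.logb_le_logb_of_le one_lt_two (by positivity) h2
    have hMnat : algMoves (SLR.algo ε) I.init I.sigma ≤
        2 * (∑ s ∈ Finset.range I.sigma.length, SLR.wv I hn s) +
          2 * SLR.dOpt I * (∑ s ∈ Finset.range I.sigma.length, SLR.rhov ε I hn s) := by
      rw [SLR.algMoves_eq]
      have h6 := (hinv I.sigma.length le_rfl).2.2.2.2.2.1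
      omega
    have hCnat := SLR.comm_le ε I hn hinv
    have hRnat := SLR.rst_count ε I hn
    have hRo := SLR.ovf_count ε I hn hε' hinv
    have hVnat := SLR.V_le_nlog I hn
    have hdnat := SLR.dOpt_le_n I
    have hV : ((∑ s ∈ Finset.range I.sigma.length, SLR.wv I hn s : ℕ) : ℝ) ≤
        (n : ℝ) * Real.logb 2 n := by
      calc ((∑ s ∈ Finset.range I.sigma.length, SLR.wv I hn s : ℕ) : ℝ) ≤
          ((n * Nat.log 2 n : ℕ) : ℝ) := by exact_mod_cast hVnat
        _ = (n : ℝ) * (Nat.log 2 n : ℝ) := by push_cast; ring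
        _ ≤ (n : ℝ) * Real.logb 2 n :=
            mul_le_mul_of_nonneg_left hlog (Nat.cast_nonneg n)
    rw [algCost]
    refine SLR.arith α ε (Real.logb 2 n) n ℓ (OPTcost α ε I)
      ((∑ s ∈ Finset.range I.sigma.length, SLR.wv I hn s : ℕ) : ℝ)
      ((∑ s ∈ Finset.range I.sigma.length, SLR.rhov ε I hn s : ℕ) : ℝ)
      ((∑ s ∈ Finset.range I.sigma.length, SLR.orhov ε I hn s : ℕ) : ℝ)
      (SLR.dOpt I : ℝ) (algMoves (SLR.algo ε) I.init I.sigma : ℝ)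
      (algComm (SLR.algo ε) I.init I.sigma : ℝ)
      hα hε (by exact_mod_cast hn0) (by exact_mod_cast hℓ0) hL1
      (by exact_mod_cast hMnat) (by exact_mod_cast hRnat) hRo hV
      (by exact_mod_cast hCnat) (by exact_mod_cast hdnat) hopt1 hopt2
      (Nat.cast_nonneg _) (Nat.cast_nonneg _)
end

section
/- There is a universal constant c > 0 such that the following holds for the online re-embedding model with two servers of capacity (1+ε)·n/2, where 0 < ε ≤ 0.98 and n = 2^a is a sufficiently large power of two (a ≥ 1000). For every deterministic online algorithm that always maintains a valid assignment, there exist an initial assignment and an input sequence σ on which the algorithm's total cost is at least c·α·n·log₂ n, while the optimal offline cost on that instance is at most O(α·n). Consequently every deterministic online algorithm has competitive ratio Ω(log n). -/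
open Finset

namespace LB

lemma fin2_cases (x : Fin 2) : x = 0 ∨ x = 1 := by omega

lemma fin2_ne (x j : Fin 2) : ¬ x = j ↔ x = j + 1 := by revert x j; decide

variable {n : ℕ}

section Basic

variable (A : OnlineAlg n 2) (a0 : Fin n → Fin 2)

/-- current assignment after all of σ has been processed -/
def cur (σ : List (Fin n × Fin n)) : Fin n → Fin 2 := state A a0 σ σ.length

lemma state_append (σ τ : List (Fin n × Fin n)) (t : ℕ) (ht : t ≤ σ.length) :
    state A a0 (σ ++ τ) t = state A a0 σ t := by
  cases t with
  | zero => rfl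
  | succ t =>
    show A a0 ((σ ++ τ).take (t+1)) = A a0 (σ.take (t+1))
    rw [List.take_append_of_le_length ht]

lemma cur_of_prefix {σ σ' : List (Fin n × Fin n)} (h : σ <+: σ') :
    cur A a0 σ = state A a0 σ' σ.length := by
  obtain ⟨τ, rfl⟩ := h
  rw [state_append A a0 σ τ σ.length le_rfl]; rfl

lemma sameComp_mono {σ σ' : List (Fin n × Fin n)} (h : σ ⊆ σ') {u v : Fin n}
    (hc : sameComp σ u v) : sameComp σ' u v := by
  refine Relation.EqvGen.mono ?_ u v hc
  intro a b hab
  exact hab.imp (fun h1 => h h1) (fun h1 => h h1)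

lemma movesBetween_self (f : Fin n → Fin 2) : movesBetween f f = 0 := by
  simp [movesBetween]

lemma movesBetween_le (f g : Fin n → Fin 2) (S : Finset (Fin n))
    (hS : ∀ v ∈ S, f v ≠ g v) : S.card ≤ movesBetween f g := by
  apply Finset.card_le_card
  intro v hv
  simp only [movesBetween, Finset.mem_filter, Finset.mem_univ, true_and]
  exact hS v hv

lemma movesBetween_triangle (f g h : Fin n → Fin 2) :
    movesBetween f h ≤ movesBetween f g + movesBetween g h := by
  unfold movesBetween
  refine le_trans (Finset.card_le_card ?_) (Finset.card_union_le _ _)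
  intro v hv
  simp only [Finset.mem_filter, Finset.mem_univ, true_and, Finset.mem_union] at *
  by_contra hc
  push_neg at hc
  exact hv (hc.1.symm ▸ hc.2 ▸ rfl)

variable (α : ℝ)

/-- abbreviation for the algorithm's total cost on a prefix -/
noncomputable def cost (σ : List (Fin n × Fin n)) : ℝ := algCost α A a0 σ

/-- per-step communication charge viewed as a function on ℕ -/
noncomputable def commAt (σ : List (Fin n × Fin n)) (t : ℕ) : ℕ :=
  if h : t < σ.length then
    (if state A a0 σ t (σ.get ⟨t, h⟩).1 ≠ state A a0 σ t (σ.get ⟨t, h⟩).2 then 1 else 0)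
  else 0

lemma algComm_eq (σ : List (Fin n × Fin n)) :
    algComm A a0 σ = ∑ t ∈ Finset.range σ.length, commAt A a0 σ t := by
  rw [algComm, ← Fin.sum_univ_eq_sum_range (commAt A a0 σ) σ.length]
  apply Finset.sum_congr rfl
  intro t _
  rw [commAt, dif_pos t.isLt]

lemma algMoves_snoc (σ : List (Fin n × Fin n)) (e : Fin n × Fin n) :
    algMoves A a0 (σ ++ [e]) = algMoves A a0 σ
      + movesBetween (cur A a0 σ) (cur A a0 (σ ++ [e])) := by
  have hlen : (σ ++ [e]).length = σ.length + 1 := by simp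
  rw [algMoves, hlen, Finset.sum_range_succ]
  congr 1
  · rw [algMoves]
    apply Finset.sum_congr rfl
    intro t ht
    rw [Finset.mem_range] at ht
    rw [state_append A a0 σ [e] t (le_of_lt ht),
        state_append A a0 σ [e] (t+1) ht]
  · rw [cur, cur, ← hlen]
    rw [state_append A a0 σ [e] σ.length le_rfl]

lemma commAt_lt (σ τ : List (Fin n × Fin n)) (t : ℕ) (ht : t < σ.length) :
    commAt A a0 (σ ++ τ) t = commAt A a0 σ t := by
  have h2 : t < (σ ++ τ).length := by simp; omega
  rw [commAt, commAt, dif_pos h2, dif_pos ht]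
  have hg : (σ ++ τ).get ⟨t, h2⟩ = σ.get ⟨t, ht⟩ := by
    simp [List.getElem_append_left ht]
  rw [hg, state_append A a0 σ τ t (le_of_lt ht)]

lemma algComm_snoc (σ : List (Fin n × Fin n)) (e : Fin n × Fin n) :
    algComm A a0 (σ ++ [e]) = algComm A a0 σ
      + (if cur A a0 σ e.1 ≠ cur A a0 σ e.2 then 1 else 0) := by
  have hlen : (σ ++ [e]).length = σ.length + 1 := by simp
  rw [algComm_eq, algComm_eq, hlen, Finset.sum_range_succ]
  congr 1
  · exact Finset.sum_congr rfl fun t ht => commAt_lt A a0 σ [e] t (Finset.mem_range.mp ht)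
  · have h2 : σ.length < (σ ++ [e]).length := by simp
    rw [commAt, dif_pos h2]
    have hg : (σ ++ [e]).get ⟨σ.length, h2⟩ = e := by simp
    rw [hg, state_append A a0 σ [e] σ.length le_rfl]
    rfl

lemma cost_snoc (σ : List (Fin n × Fin n)) (e : Fin n × Fin n) :
    cost A a0 α (σ ++ [e]) = cost A a0 α σ
      + α * movesBetween (cur A a0 σ) (cur A a0 (σ ++ [e]))
      + (if cur A a0 σ e.1 ≠ cur A a0 σ e.2 then (1:ℝ) else 0) := by
  rw [cost, cost, algCost, algCost, algMoves_snoc, algComm_snoc]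
  push_cast
  split_ifs <;> ring

variable {α}

lemma cost_snoc_ge (hα : 0 < α) (σ : List (Fin n × Fin n)) (e : Fin n × Fin n) :
    cost A a0 α σ ≤ cost A a0 α (σ ++ [e]) := by
  rw [cost_snoc]
  have h1 : (0:ℝ) ≤ α * movesBetween (cur A a0 σ) (cur A a0 (σ ++ [e])) :=
    mul_nonneg hα.le (Nat.cast_nonneg _)
  have h2 : (0:ℝ) ≤ (if cur A a0 σ e.1 ≠ cur A a0 σ e.2 then (1:ℝ) else 0) := by positivity
  linarith

lemma cost_ext (hα : 0 < α) (τ σ : List (Fin n × Fin n)) :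
    cost A a0 α σ + α * movesBetween (cur A a0 σ) (cur A a0 (σ ++ τ)) ≤
      cost A a0 α (σ ++ τ) := by
  induction τ using List.reverseRecOn generalizing σ with
  | nil => simp [movesBetween_self]
  | append_singleton l e ih =>
    have h1 := ih σ
    rw [← List.append_assoc]
    rw [cost_snoc]
    have htri := movesBetween_triangle (cur A a0 σ) (cur A a0 (σ ++ l)) (cur A a0 ((σ ++ l) ++ [e]))
    have htri' : (movesBetween (cur A a0 σ) (cur A a0 ((σ ++ l) ++ [e])) : ℝ) ≤
        movesBetween (cur A a0 σ) (cur A a0 (σ ++ l)) +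
        movesBetween (cur A a0 (σ ++ l)) (cur A a0 ((σ ++ l) ++ [e])) := by
      exact_mod_cast htri
    have h2 : (0:ℝ) ≤ (if cur A a0 (σ++l) e.1 ≠ cur A a0 (σ++l) e.2 then (1:ℝ) else 0) := by positivity
    nlinarith [mul_le_mul_of_nonneg_left htri' hα.le]

lemma cost_mono (hα : 0 < α) {σ σ' : List (Fin n × Fin n)} (h : σ <+: σ') :
    cost A a0 α σ ≤ cost A a0 α σ' := by
  obtain ⟨τ, rfl⟩ := h
  have := cost_ext A a0 (α := α) hα τ σ
  have h1 : (0:ℝ) ≤ α * movesBetween (cur A a0 σ) (cur A a0 (σ ++ τ)) :=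
    mul_nonneg hα.le (Nat.cast_nonneg _)
  linarith

lemma cost_nil : cost A a0 α [] = 0 := by
  simp [cost, algCost, algMoves, algComm]

/-! ### Hammering a set until it is monochromatic -/

def monoOn (S : Finset (Fin n)) (f : Fin n → Fin 2) : Prop := ∃ j, ∀ v ∈ S, f v = j

open Classical in
noncomputable def hammer (S : Finset (Fin n)) : ℕ → List (Fin n × Fin n) → List (Fin n × Fin n)
  | 0, σ => σ
  | T+1, σ =>
    if h : ∃ p : Fin n × Fin n, p.1 ∈ S ∧ p.2 ∈ S ∧ cur A a0 σ p.1 ≠ cur A a0 σ p.2 then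
      hammer S T (σ ++ [h.choose])
    else σ

lemma not_split_mono {S : Finset (Fin n)} {f : Fin n → Fin 2} (hS : S.Nonempty)
    (h : ¬ ∃ p : Fin n × Fin n, p.1 ∈ S ∧ p.2 ∈ S ∧ f p.1 ≠ f p.2) : monoOn S f := by
  push_neg at h
  exact ⟨f hS.choose, fun v hv => (h (hS.choose, v) hS.choose_spec hv).symm⟩

lemma hammer_prefix (S : Finset (Fin n)) (T : ℕ) (σ : List (Fin n × Fin n)) :
    σ <+: hammer A a0 S T σ := by
  induction T generalizing σ with
  | zero => exact List.prefix_refl σ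
  | succ T ih =>
    rw [hammer]
    split_ifs with h
    · exact List.IsPrefix.trans (List.prefix_append σ _) (ih _)
    · exact List.prefix_refl σ

lemma hammer_edges (S : Finset (Fin n)) (T : ℕ) (σ : List (Fin n × Fin n)) :
    ∀ e ∈ hammer A a0 S T σ, e ∈ σ ∨ (e.1 ∈ S ∧ e.2 ∈ S) := by
  induction T generalizing σ with
  | zero => intro e he; exact Or.inl he
  | succ T ih =>
    rw [hammer]
    split_ifs with h
    · intro e he
      rcases ih _ e he with h1 | h1
      · rw [List.mem_append] at h1
        rcases h1 with h1 | h1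
        · exact Or.inl h1
        · rw [List.mem_singleton] at h1
          subst h1
          exact Or.inr ⟨h.choose_spec.1, h.choose_spec.2.1⟩
      · exact Or.inr h1
    · intro e he; exact Or.inl he

lemma hammer_comm (hα : 0 < α) (S : Finset (Fin n)) (hS : S.Nonempty) (T : ℕ)
    (σ : List (Fin n × Fin n))
    (h : ¬ monoOn S (cur A a0 (hammer A a0 S T σ))) :
    cost A a0 α σ + T ≤ cost A a0 α (hammer A a0 S T σ) := by
  induction T generalizing σ with
  | zero => simp [hammer]
  | succ T ih =>
    rw [hammer] at h ⊢
    split_ifs at h ⊢ with hsp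
    · have h1 := ih (σ ++ [hsp.choose]) h
      have h2 := cost_snoc A a0 α σ hsp.choose
      rw [if_pos hsp.choose_spec.2.2] at h2
      have h3 : (0:ℝ) ≤ α * movesBetween (cur A a0 σ) (cur A a0 (σ ++ [hsp.choose])) :=
        mul_nonneg hα.le (Nat.cast_nonneg _)
      push_cast
      push_cast at h1
      linarith
    · exact absurd (not_split_mono hS hsp) h

lemma hammer_cost (hα : 0 < α) (S : Finset (Fin n)) (hS : S.Nonempty) (T : ℕ)
    (σ : List (Fin n × Fin n)) :
    cost A a0 α σ +
      min (T : ℝ) (α * min ((S.filter fun v => cur A a0 σ v = 0).card : ℝ)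
        ((S.filter fun v => cur A a0 σ v = 1).card : ℝ))
      ≤ cost A a0 α (hammer A a0 S T σ) := by
  by_cases hm : monoOn S (cur A a0 (hammer A a0 S T σ))
  · obtain ⟨j, hj⟩ := hm
    obtain ⟨τ, hτ⟩ := hammer_prefix A a0 S T σ
    have hext := cost_ext A a0 (α := α) hα τ σ
    rw [hτ] at hext
    have hsub : (S.filter fun v => cur A a0 σ v = j + 1).card ≤
        movesBetween (cur A a0 σ) (cur A a0 (hammer A a0 S T σ)) := by
      apply movesBetween_le
      intro v hv
      rw [Finset.mem_filter] at hv
      rw [hv.2, hj v hv.1]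
      omega
    have hmin : min ((S.filter fun v => cur A a0 σ v = 0).card : ℝ)
        ((S.filter fun v => cur A a0 σ v = 1).card : ℝ)
        ≤ ((S.filter fun v => cur A a0 σ v = j + 1).card : ℝ) := by
      rcases fin2_cases j with rfl | rfl
      · exact min_le_right _ _
      · have : (1 : Fin 2) + 1 = 0 := rfl
        rw [this]
        exact min_le_left _ _
    have hcast : ((S.filter fun v => cur A a0 σ v = j + 1).card : ℝ) ≤
        (movesBetween (cur A a0 σ) (cur A a0 (hammer A a0 S T σ)) : ℝ) := by exact_mod_cast hsub
    have := mul_le_mul_of_nonneg_left (le_trans hmin hcast) hα.le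
    have hm2 : min (T:ℝ) (α * min ((S.filter fun v => cur A a0 σ v = 0).card : ℝ)
        ((S.filter fun v => cur A a0 σ v = 1).card : ℝ)) ≤
        α * movesBetween (cur A a0 σ) (cur A a0 (hammer A a0 S T σ)) :=
      le_trans (min_le_right _ _) this
    linarith
  · have := hammer_comm A a0 (α := α) hα S hS T σ hm
    have h1 : min (T:ℝ) (α * min ((S.filter fun v => cur A a0 σ v = 0).card : ℝ)
        ((S.filter fun v => cur A a0 σ v = 1).card : ℝ)) ≤ (T:ℝ) := min_le_left _ _
    linarith

/-! ### Level invariants -/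

/-- Invariant during a level: unmerged comps (size `s`), merged comps (size `2s`). -/
structure LInv (s : ℕ) (U M : Finset (Finset (Fin n))) (σ : List (Fin n × Fin n)) : Prop where
  sizesU : ∀ C ∈ U, C.card = s
  sizesM : ∀ C ∈ M, C.card = 2 * s
  disj : ∀ C ∈ U ∪ M, ∀ D ∈ U ∪ M, C ≠ D → Disjoint C D
  cover : ∀ v : Fin n, ∃ C ∈ U ∪ M, v ∈ C
  conn : ∀ C ∈ U ∪ M, ∀ u ∈ C, ∀ v ∈ C, sameComp σ u v
  edges : ∀ e ∈ σ, ∃ C ∈ U ∪ M, e.1 ∈ C ∧ e.2 ∈ C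

lemma sum_filter_card (P : Finset (Finset (Fin n)))
    (hdisj : ∀ C ∈ P, ∀ D ∈ P, C ≠ D → Disjoint C D)
    (hcover : ∀ v : Fin n, ∃ C ∈ P, v ∈ C) (p : Fin n → Prop) [DecidablePred p] :
    (Finset.univ.filter p).card = ∑ C ∈ P, (C.filter p).card := by
  have huniv : (Finset.univ : Finset (Fin n)) = P.biUnion id := by
    ext v
    simp only [Finset.mem_univ, Finset.mem_biUnion, id, true_iff]
    exact hcover v
  rw [huniv, Finset.filter_biUnion]
  simp only [id]
  rw [Finset.card_biUnion
    (fun C hC D hD hne => Finset.disjoint_filter_filter (hdisj C hC D hD hne))]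

lemma sum_card_le (P : Finset (Finset (Fin n)))
    (hdisj : ∀ C ∈ P, ∀ D ∈ P, C ≠ D → Disjoint C D) :
    ∑ C ∈ P, C.card ≤ n := by
  rw [← Finset.card_biUnion (fun C hC D hD hne => hdisj C hC D hD hne)]
  calc (P.biUnion id).card ≤ (Finset.univ : Finset (Fin n)).card := Finset.card_le_card (by simp)
  _ = n := by simp

lemma sum_card_eq (P : Finset (Finset (Fin n)))
    (hdisj : ∀ C ∈ P, ∀ D ∈ P, C ≠ D → Disjoint C D)
    (hcover : ∀ v : Fin n, ∃ C ∈ P, v ∈ C) :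
    ∑ C ∈ P, C.card = n := by
  have := sum_filter_card P hdisj hcover (fun _ => True)
  simpa using this.symm

lemma filter_fin2_card (S : Finset (Fin n)) (f : Fin n → Fin 2) (j : Fin 2) :
    (S.filter fun v => f v = j).card + (S.filter fun v => f v = j + 1).card = S.card := by
  have h1 : (S.filter fun v => f v = j + 1) = (S.filter fun v => ¬ f v = j) := by
    apply Finset.filter_congr
    intro v _
    simp [fin2_ne (f v) j]
  rw [h1]
  exact Finset.card_filter_add_card_filter_not _

variable (A : OnlineAlg n 2) (a0 : Fin n → Fin 2)

lemma server_lb {ε : ℝ} {f : Fin n → Fin 2} (hf : validCap ε f) (j : Fin 2) :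
    (1 - ε) * n / 2 ≤ ((Finset.univ.filter fun v => f v = j).card : ℝ) := by
  have h1 := filter_fin2_card (Finset.univ : Finset (Fin n)) f j
  have h2 := hf (j + 1)
  have h3 : (Finset.univ : Finset (Fin n)).card = n := by simp
  rw [h3] at h1
  have h1' : ((Finset.univ.filter fun v => f v = j).card : ℝ)
      + ((Finset.univ.filter fun v => f v = j + 1).card : ℝ) = n := by exact_mod_cast h1
  push_cast at h2
  linarith

/-- the mass-counting bound at a node where all unmerged components have small
`j`-mass. -/
lemma mass_bound {s : ℕ} {U M : Finset (Finset (Fin n))} {σ : List (Fin n × Fin n)}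
    {ε δ : ℝ} (hL : LInv s U M σ) (hs : 0 < s)
    (hval : validCap ε (cur A a0 σ)) (j : Fin 2) (hδ : 0 ≤ δ)
    (hall : ∀ C ∈ U, ((C.filter fun v => cur A a0 σ v = j).card : ℝ) ≤ δ * s) :
    (1 - ε) * n / 2 ≤ δ * n + 2 * s * M.card := by
  classical
  have hUM : Disjoint U M := by
    rw [Finset.disjoint_left]
    intro C hCU hCM
    have := hL.sizesU C hCU
    have := hL.sizesM C hCM
    omega
  have hsplit := sum_filter_card (U ∪ M) hL.disj hL.cover (fun v => cur A a0 σ v = j)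
  rw [Finset.sum_union hUM] at hsplit
  have hlb := server_lb (f := cur A a0 σ) hval j
  -- bound the U part
  have hUpart : ((∑ C ∈ U, (C.filter fun v => cur A a0 σ v = j).card : ℕ) : ℝ) ≤ δ * n := by
    push_cast
    calc (∑ C ∈ U, ((C.filter fun v => cur A a0 σ v = j).card : ℝ))
        ≤ ∑ C ∈ U, δ * s := Finset.sum_le_sum fun C hC => hall C hC
      _ = δ * (s * U.card) := by rw [Finset.sum_const, nsmul_eq_mul]; ring
      _ ≤ δ * n := by
          apply mul_le_mul_of_nonneg_left _ hδ
          have h1 : ∑ C ∈ U, C.card ≤ n :=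
            sum_card_le U (fun C hC D hD hne => hL.disj C (Finset.mem_union_left _ hC)
              D (Finset.mem_union_left _ hD) hne)
          have h2 : ∑ C ∈ U, C.card = s * U.card := by
            rw [Finset.sum_congr rfl (fun C hC => hL.sizesU C hC), Finset.sum_const, smul_eq_mul,
              mul_comm]
          rw [h2] at h1
          exact_mod_cast h1
  have hMpart : ((∑ C ∈ M, (C.filter fun v => cur A a0 σ v = j).card : ℕ) : ℝ) ≤ 2 * s * M.card := by
    push_cast
    calc (∑ C ∈ M, ((C.filter fun v => cur A a0 σ v = j).card : ℝ))
        ≤ ∑ C ∈ M, ((C.card : ℝ)) := by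
          apply Finset.sum_le_sum
          intro C hC
          exact_mod_cast Finset.card_le_card (Finset.filter_subset _ _)
      _ = ∑ C ∈ M, ((2 * s : ℕ) : ℝ) := by
          apply Finset.sum_congr rfl
          intro C hC
          rw [hL.sizesM C hC]
      _ = 2 * s * M.card := by rw [Finset.sum_const]; push_cast; ring
  have hcast : ((Finset.univ.filter fun v => cur A a0 σ v = j).card : ℝ)
      = ((∑ C ∈ U, (C.filter fun v => cur A a0 σ v = j).card : ℕ) : ℝ)
        + ((∑ C ∈ M, (C.filter fun v => cur A a0 σ v = j).card : ℕ) : ℝ) := by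
    exact_mod_cast congrArg Nat.cast hsplit
  linarith

/-! ### The adversary's merge machinery -/

/-- Paid-pair condition: `C` has `θ` mass on server 1 and `D` has `θ` mass on server 0. -/
def paidCond (θ : ℝ) (σ : List (Fin n × Fin n)) (C D : Finset (Fin n)) : Prop :=
  θ ≤ ((C.filter fun v => cur A a0 σ v = 1).card : ℝ) ∧
  θ ≤ ((D.filter fun v => cur A a0 σ v = 0).card : ℝ)

open Classical in
noncomputable def pick (θ : ℝ) (σ : List (Fin n × Fin n)) (U : Finset (Finset (Fin n))) :
    Finset (Fin n) × Finset (Fin n) :=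
  if h : ∃ p : Finset (Fin n) × Finset (Fin n),
      p.1 ∈ U ∧ p.2 ∈ U ∧ p.1 ≠ p.2 ∧ paidCond A a0 θ σ p.1 p.2 then h.choose
  else if h2 : ∃ p : Finset (Fin n) × Finset (Fin n), p.1 ∈ U ∧ p.2 ∈ U ∧ p.1 ≠ p.2 then h2.choose
  else (∅, ∅)

lemma pick_spec {θ : ℝ} {σ : List (Fin n × Fin n)} {U : Finset (Finset (Fin n))}
    (h2 : ∃ p : Finset (Fin n) × Finset (Fin n), p.1 ∈ U ∧ p.2 ∈ U ∧ p.1 ≠ p.2) :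
    (pick A a0 θ σ U).1 ∈ U ∧ (pick A a0 θ σ U).2 ∈ U ∧ (pick A a0 θ σ U).1 ≠ (pick A a0 θ σ U).2 := by
  rw [pick]
  split_ifs with h
  · exact ⟨h.choose_spec.1, h.choose_spec.2.1, h.choose_spec.2.2.1⟩
  · exact ⟨h2.choose_spec.1, h2.choose_spec.2.1, h2.choose_spec.2.2⟩

lemma pick_paid {θ : ℝ} {σ : List (Fin n × Fin n)} {U : Finset (Finset (Fin n))}
    (h : ∃ p : Finset (Fin n) × Finset (Fin n),
      p.1 ∈ U ∧ p.2 ∈ U ∧ p.1 ≠ p.2 ∧ paidCond A a0 θ σ p.1 p.2) :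
    paidCond A a0 θ σ (pick A a0 θ σ U).1 (pick A a0 θ σ U).2 := by
  rw [pick, dif_pos h]
  exact h.choose_spec.2.2.2

open Classical in
noncomputable def link (C D : Finset (Fin n)) (σ : List (Fin n × Fin n)) :
    List (Fin n × Fin n) :=
  if h : ∃ p : Fin n × Fin n, p.1 ∈ C ∧ p.2 ∈ D then σ ++ [h.choose] else σ

lemma link_prefix (C D : Finset (Fin n)) (σ : List (Fin n × Fin n)) : σ <+: link C D σ := by
  rw [link]; split_ifs
  · exact List.prefix_append σ _
  · exact List.prefix_refl σ

lemma link_edges (C D : Finset (Fin n)) (σ : List (Fin n × Fin n)) :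
    ∀ e ∈ link C D σ, e ∈ σ ∨ (e.1 ∈ C ∧ e.2 ∈ D) := by
  rw [link]; split_ifs with h
  · intro e he
    rw [List.mem_append, List.mem_singleton] at he
    rcases he with he | rfl
    · exact Or.inl he
    · exact Or.inr ⟨h.choose_spec.1, h.choose_spec.2⟩
  · exact fun e he => Or.inl he

lemma link_conn {C D : Finset (Fin n)} (hC : C.Nonempty) (hD : D.Nonempty)
    (σ : List (Fin n × Fin n)) :
    ∃ w1 ∈ C, ∃ w2 ∈ D, sameComp (link C D σ) w1 w2 := by
  have h : ∃ p : Fin n × Fin n, p.1 ∈ C ∧ p.2 ∈ D := ⟨(hC.choose, hD.choose), hC.choose_spec, hD.choose_spec⟩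
  rw [link, dif_pos h]
  refine ⟨h.choose.1, h.choose_spec.1, h.choose.2, h.choose_spec.2, ?_⟩
  exact Relation.EqvGen.rel _ _ (Or.inl (by simp))

open Classical in
noncomputable def mergeSeq (θ : ℝ) (T : ℕ) (U : Finset (Finset (Fin n)))
    (σ : List (Fin n × Fin n)) : List (Fin n × Fin n) :=
  link ((pick A a0 θ σ U).1) ((pick A a0 θ σ U).2)
    (if ∃ p : Finset (Fin n) × Finset (Fin n),
        p.1 ∈ U ∧ p.2 ∈ U ∧ p.1 ≠ p.2 ∧ paidCond A a0 θ σ p.1 p.2 then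
      hammer A a0 ((pick A a0 θ σ U).1 ∪ (pick A a0 θ σ U).2) T σ
    else σ)

lemma mergeSeq_prefix (θ : ℝ) (T : ℕ) (U : Finset (Finset (Fin n))) (σ : List (Fin n × Fin n)) :
    σ <+: mergeSeq A a0 θ T U σ := by
  rw [mergeSeq]
  refine List.IsPrefix.trans ?_ (link_prefix _ _ _)
  split_ifs with h
  · exact hammer_prefix A a0 _ T σ
  · exact List.prefix_refl σ

lemma mergeSeq_edges (θ : ℝ) (T : ℕ) (U : Finset (Finset (Fin n))) (σ : List (Fin n × Fin n)) :
    ∀ e ∈ mergeSeq A a0 θ T U σ, e ∈ σ ∨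
      (e.1 ∈ (pick A a0 θ σ U).1 ∪ (pick A a0 θ σ U).2 ∧
       e.2 ∈ (pick A a0 θ σ U).1 ∪ (pick A a0 θ σ U).2) := by
  rw [mergeSeq]
  intro e he
  rcases link_edges _ _ _ e he with h1 | h1
  · split_ifs at h1 with hp
    · rcases hammer_edges A a0 _ T σ e h1 with h2 | h2
      · exact Or.inl h2
      · exact Or.inr h2
    · exact Or.inl h1
  · exact Or.inr ⟨Finset.mem_union_left _ h1.1, Finset.mem_union_right _ h1.2⟩

lemma mergeSeq_conn {θ : ℝ} {T : ℕ} {U : Finset (Finset (Fin n))} {σ : List (Fin n × Fin n)}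
    (hC : (pick A a0 θ σ U).1.Nonempty) (hD : (pick A a0 θ σ U).2.Nonempty) :
    ∃ w1 ∈ (pick A a0 θ σ U).1, ∃ w2 ∈ (pick A a0 θ σ U).2,
      sameComp (mergeSeq A a0 θ T U σ) w1 w2 := by
  rw [mergeSeq]
  exact link_conn hC hD _

lemma mergeSeq_cost_mono {α : ℝ} (hα : 0 < α) (θ : ℝ) (T : ℕ) (U : Finset (Finset (Fin n)))
    (σ : List (Fin n × Fin n)) :
    cost A a0 α σ ≤ cost A a0 α (mergeSeq A a0 θ T U σ) :=
  cost_mono A a0 hα (mergeSeq_prefix A a0 θ T U σ)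

lemma mergeSeq_cost_paid {α θ : ℝ} {T : ℕ} {U : Finset (Finset (Fin n))}
    {σ : List (Fin n × Fin n)} (hα : 0 < α) (hθ : 0 ≤ θ) (hT : α * θ ≤ T)
    (hp : ∃ p : Finset (Fin n) × Finset (Fin n),
      p.1 ∈ U ∧ p.2 ∈ U ∧ p.1 ≠ p.2 ∧ paidCond A a0 θ σ p.1 p.2)
    (hCne : (pick A a0 θ σ U).1.Nonempty) :
    cost A a0 α σ + α * θ ≤ cost A a0 α (mergeSeq A a0 θ T U σ) := by
  have hpaid := pick_paid A a0 hp
  set C := (pick A a0 θ σ U).1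
  set D := (pick A a0 θ σ U).2
  have hSne : (C ∪ D).Nonempty := hCne.mono Finset.subset_union_left
  have hham := hammer_cost A a0 (α := α) hα (C ∪ D) hSne T σ
  have hm1 : θ ≤ (((C ∪ D).filter fun v => cur A a0 σ v = 1).card : ℝ) := by
    refine le_trans hpaid.1 ?_
    exact_mod_cast Finset.card_le_card
      (Finset.filter_subset_filter _ Finset.subset_union_left)
  have hm0 : θ ≤ (((C ∪ D).filter fun v => cur A a0 σ v = 0).card : ℝ) := by
    refine le_trans hpaid.2 ?_
    exact_mod_cast Finset.card_le_card
      (Finset.filter_subset_filter _ Finset.subset_union_right)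
  have hmin : α * θ ≤ min (T : ℝ)
      (α * min (((C ∪ D).filter fun v => cur A a0 σ v = 0).card : ℝ)
        (((C ∪ D).filter fun v => cur A a0 σ v = 1).card : ℝ)) := by
    refine le_min hT ?_
    exact mul_le_mul_of_nonneg_left (le_min hm0 hm1) hα.le
  have hlink : cost A a0 α (hammer A a0 (C ∪ D) T σ) ≤ cost A a0 α (mergeSeq A a0 θ T U σ) := by
    rw [mergeSeq, if_pos hp]
    exact cost_mono A a0 hα (link_prefix _ _ _)
  linarith

/-- Trichotomy at an unpaid node: all unmerged comps are light on one of the servers. -/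
lemma no_paid_cases {θ : ℝ} {s : ℕ} {σ : List (Fin n × Fin n)} {U : Finset (Finset (Fin n))}
    (hsizes : ∀ C ∈ U, C.card = s) (hθ2 : θ + θ ≤ s)
    (h2 : ∃ p : Finset (Fin n) × Finset (Fin n), p.1 ∈ U ∧ p.2 ∈ U ∧ p.1 ≠ p.2)
    (hnp : ¬ ∃ p : Finset (Fin n) × Finset (Fin n),
      p.1 ∈ U ∧ p.2 ∈ U ∧ p.1 ≠ p.2 ∧ paidCond A a0 θ σ p.1 p.2) :
    (∀ C ∈ U, ((C.filter fun v => cur A a0 σ v = 1).card : ℝ) ≤ θ) ∨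
    (∀ C ∈ U, ((C.filter fun v => cur A a0 σ v = 0).card : ℝ) ≤ θ) := by
  by_contra hcon
  push_neg at hcon
  obtain ⟨⟨C₀, hC₀, hm1⟩, ⟨D₀, hD₀, hm0⟩⟩ := hcon
  push_neg at hnp
  by_cases hCD : C₀ = D₀
  · subst hCD
    obtain ⟨⟨P, Q⟩, hP, hQ, hPQ⟩ := h2
    simp only at hP hQ hPQ
    obtain ⟨E, hE, hEne⟩ : ∃ E ∈ U, E ≠ C₀ := by
      by_cases hPC : P = C₀
      · exact ⟨Q, hQ, fun hq => hPQ (hPC.trans hq.symm)⟩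
      · exact ⟨P, hP, hPC⟩
    have hcard := filter_fin2_card E (cur A a0 σ) 0
    rw [hsizes E hE] at hcard
    have h01 : ((0 : Fin 2) + 1) = 1 := rfl
    rw [h01] at hcard
    by_cases hE0 : θ ≤ ((E.filter fun v => cur A a0 σ v = 0).card : ℝ)
    · exact absurd ⟨hm1.le, hE0⟩ (hnp (C₀, E) hC₀ hE (fun h => hEne h.symm))
    · push_neg at hE0
      have hE1 : θ ≤ ((E.filter fun v => cur A a0 σ v = 1).card : ℝ) := by
        have : ((E.filter fun v => cur A a0 σ v = 0).card : ℝ)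
            + ((E.filter fun v => cur A a0 σ v = 1).card : ℝ) = s := by exact_mod_cast hcard
        linarith
      exact absurd ⟨hE1, hm0.le⟩ (hnp (E, C₀) hE hC₀ hEne)
  · exact absurd ⟨hm1.le, hm0.le⟩ (hnp (C₀, D₀) hC₀ hD₀ hCD)

/-! ### One level of the adversary -/

open Classical in
noncomputable def doLevel (θ : ℝ) (T : ℕ) :
    ℕ → Finset (Finset (Fin n)) → Finset (Finset (Fin n)) → List (Fin n × Fin n) →
      Finset (Finset (Fin n)) × List (Fin n × Fin n)
  | 0, U, M, σ => (M ∪ U, σ)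
  | f+1, U, M, σ =>
    if h2 : ∃ p : Finset (Fin n) × Finset (Fin n), p.1 ∈ U ∧ p.2 ∈ U ∧ p.1 ≠ p.2 then
      doLevel θ T f ((U.erase (pick A a0 θ σ U).1).erase (pick A a0 θ σ U).2)
        (insert ((pick A a0 θ σ U).1 ∪ (pick A a0 θ σ U).2) M)
        (mergeSeq A a0 θ T U σ)
    else (M ∪ U, σ)

lemma doLevel_prefix (θ : ℝ) (T : ℕ) :
    ∀ (f : ℕ) (U M : Finset (Finset (Fin n))) (σ : List (Fin n × Fin n)),
      σ <+: (doLevel A a0 θ T f U M σ).2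
  | 0, U, M, σ => List.prefix_refl σ
  | f+1, U, M, σ => by
    rw [doLevel]
    split_ifs with h2
    · exact (mergeSeq_prefix A a0 θ T U σ).trans (doLevel_prefix θ T f _ _ _)
    · exact List.prefix_refl σ

lemma ne_of_card {s : ℕ} (hs : 0 < s) {C X : Finset (Fin n)} (hC : C.card = s)
    (hX : X.card = 2 * s) : C ≠ X := by
  intro h; rw [h, hX] at hC; omega

set_option maxHeartbeats 2000000 in
/-- invariant transfer at a merge step -/
lemma step_inv {θ : ℝ} {T s : ℕ} {U M : Finset (Finset (Fin n))} {σ : List (Fin n × Fin n)}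
    (hL : LInv s U M σ) (hs : 0 < s)
    (h2 : ∃ p : Finset (Fin n) × Finset (Fin n), p.1 ∈ U ∧ p.2 ∈ U ∧ p.1 ≠ p.2) :
    LInv s ((U.erase (pick A a0 θ σ U).1).erase (pick A a0 θ σ U).2)
      (insert ((pick A a0 θ σ U).1 ∪ (pick A a0 θ σ U).2) M) (mergeSeq A a0 θ T U σ) ∧
    ((U.erase (pick A a0 θ σ U).1).erase (pick A a0 θ σ U).2).card + 2 = U.card ∧
    (insert ((pick A a0 θ σ U).1 ∪ (pick A a0 θ σ U).2) M).card = M.card + 1 := by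
  obtain ⟨hC, hD, hne⟩ := pick_spec A a0 (θ := θ) (σ := σ) h2
  set C := (pick A a0 θ σ U).1 with hCdef
  set D := (pick A a0 θ σ U).2 with hDdef
  set σ₂ := mergeSeq A a0 θ T U σ with hσ₂
  have hCcard : C.card = s := hL.sizesU C hC
  have hDcard : D.card = s := hL.sizesU D hD
  have hCne : C.Nonempty := Finset.card_pos.mp (by omega)
  have hDne : D.Nonempty := Finset.card_pos.mp (by omega)
  have hdisjCD : Disjoint C D :=
    hL.disj C (Finset.mem_union_left _ hC) D (Finset.mem_union_left _ hD) hne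
  have hCDcard : (C ∪ D).card = 2 * s := by
    rw [Finset.card_union_of_disjoint hdisjCD, hCcard, hDcard]; ring
  have hsub : σ ⊆ σ₂ := (mergeSeq_prefix A a0 θ T U σ).subset
  -- membership characterization
  have hmem : ∀ X ∈ (U.erase C).erase D ∪ insert (C ∪ D) M,
      X = C ∪ D ∨ (X ∈ U ∪ M ∧ X ≠ C ∧ X ≠ D) := by
    intro X hX
    rcases Finset.mem_union.mp hX with hX | hX
    · rw [Finset.mem_erase] at hX
      have hXD := hX.1
      have hXC := (Finset.mem_erase.mp hX.2).1
      have hXU := (Finset.mem_erase.mp hX.2).2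
      exact Or.inr ⟨Finset.mem_union_left _ hXU, hXC, hXD⟩
    · rcases Finset.mem_insert.mp hX with rfl | hXM
      · exact Or.inl rfl
      · refine Or.inr ⟨Finset.mem_union_right _ hXM, ?_, ?_⟩
        · exact fun h => (ne_of_card hs hCcard (hL.sizesM X hXM)) h.symm
        · exact fun h => (ne_of_card hs hDcard (hL.sizesM X hXM)) h.symm
  have hCDnotM : C ∪ D ∉ M := by
    intro hmm
    have hCne2 : C ≠ C ∪ D := ne_of_card hs hCcard (hL.sizesM _ hmm)
    have := hL.disj C (Finset.mem_union_left _ hC) (C ∪ D) (Finset.mem_union_right _ hmm) hCne2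
    rw [Finset.disjoint_left] at this
    exact this hCne.choose_spec (Finset.mem_union_left _ hCne.choose_spec)
  have hDC : D ∈ U.erase C := Finset.mem_erase.mpr ⟨hne.symm, hD⟩
  have hUcard : 2 ≤ U.card := Finset.one_lt_card.mpr ⟨C, hC, D, hD, hne⟩
  refine ⟨?_, ?_, Finset.card_insert_of_notMem hCDnotM⟩
  swap
  · rw [Finset.card_erase_of_mem hDC, Finset.card_erase_of_mem hC]
    omega
  -- the new comp's connectivity
  obtain ⟨w1, hw1, w2, hw2, hw⟩ := mergeSeq_conn A a0 (θ := θ) (T := T) (U := U) (σ := σ) hCne hDne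
  have hkey : ∀ x ∈ C ∪ D, sameComp σ₂ x w1 := by
    intro x hx
    rcases Finset.mem_union.mp hx with hx | hx
    · exact sameComp_mono hsub (hL.conn C (Finset.mem_union_left _ hC) x hx w1 hw1)
    · exact Relation.EqvGen.trans _ _ _
        (sameComp_mono hsub (hL.conn D (Finset.mem_union_left _ hD) x hx w2 hw2))
        (Relation.EqvGen.symm _ _ hw)
  constructor
  · -- sizesU
    intro X hX
    exact hL.sizesU X (Finset.mem_of_mem_erase (Finset.mem_of_mem_erase hX))
  · -- sizesM
    intro X hX
    rcases Finset.mem_insert.mp hX with rfl | hXM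
    · exact hCDcard
    · exact hL.sizesM X hXM
  · -- disj
    intro X hX Y hY hXY
    rcases hmem X hX with rfl | ⟨hXold, hXC, hXD⟩
    · rcases hmem Y hY with rfl | ⟨hYold, hYC, hYD⟩
      · exact absurd rfl hXY
      · refine Finset.disjoint_union_left.mpr ⟨?_, ?_⟩
        · exact hL.disj C (Finset.mem_union_left _ hC) Y hYold (fun h => hYC h.symm)
        · exact hL.disj D (Finset.mem_union_left _ hD) Y hYold (fun h => hYD h.symm)
    · rcases hmem Y hY with rfl | ⟨hYold, hYC, hYD⟩
      · refine (Finset.disjoint_union_right.mpr ⟨?_, ?_⟩)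
        · exact hL.disj X hXold C (Finset.mem_union_left _ hC) hXC
        · exact hL.disj X hXold D (Finset.mem_union_left _ hD) hXD
      · exact hL.disj X hXold Y hYold hXY
  · -- cover
    intro v
    obtain ⟨X, hX, hvX⟩ := hL.cover v
    by_cases hXC : X = C
    · subst hXC
      exact ⟨C ∪ D, Finset.mem_union_right _ (Finset.mem_insert_self _ _),
        Finset.mem_union_left _ hvX⟩
    · by_cases hXD : X = D
      · subst hXD
        exact ⟨C ∪ D, Finset.mem_union_right _ (Finset.mem_insert_self _ _),
          Finset.mem_union_right _ hvX⟩
      · rcases Finset.mem_union.mp hX with hXU | hXM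
        · exact ⟨X, Finset.mem_union_left _
            (Finset.mem_erase.mpr ⟨hXD, Finset.mem_erase.mpr ⟨hXC, hXU⟩⟩), hvX⟩
        · exact ⟨X, Finset.mem_union_right _ (Finset.mem_insert_of_mem hXM), hvX⟩
  · -- conn
    intro X hX u hu v hv
    rcases hmem X hX with rfl | ⟨hXold, _, _⟩
    · exact Relation.EqvGen.trans _ _ _ (hkey u hu) (Relation.EqvGen.symm _ _ (hkey v hv))
    · exact sameComp_mono hsub (hL.conn X hXold u hu v hv)
  · -- edges
    intro e he
    rcases mergeSeq_edges A a0 θ T U σ e he with h1 | h1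
    · obtain ⟨X, hX, he1, he2⟩ := hL.edges e h1
      by_cases hXC : X = C
      · subst hXC
        exact ⟨C ∪ D, Finset.mem_union_right _ (Finset.mem_insert_self _ _),
          Finset.mem_union_left _ he1, Finset.mem_union_left _ he2⟩
      · by_cases hXD : X = D
        · subst hXD
          exact ⟨C ∪ D, Finset.mem_union_right _ (Finset.mem_insert_self _ _),
            Finset.mem_union_right _ he1, Finset.mem_union_right _ he2⟩
        · rcases Finset.mem_union.mp hX with hXU | hXM
          · exact ⟨X, Finset.mem_union_left _
              (Finset.mem_erase.mpr ⟨hXD, Finset.mem_erase.mpr ⟨hXC, hXU⟩⟩), he1, he2⟩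
          · exact ⟨X, Finset.mem_union_right _ (Finset.mem_insert_of_mem hXM), he1, he2⟩
    · exact ⟨C ∪ D, Finset.mem_union_right _ (Finset.mem_insert_self _ _), h1.1, h1.2⟩

lemma terminal_inv {s : ℕ} {U M : Finset (Finset (Fin n))} {σ : List (Fin n × Fin n)}
    (hL : LInv s U M σ) (hU : U = ∅) : LInv (2 * s) (M ∪ U) ∅ σ := by
  subst hU
  rw [Finset.union_empty]
  have hM : ∀ X : Finset (Fin n), X ∈ M ∪ (∅ : Finset (Finset (Fin n))) ↔ X ∈ M := by
    intro X; rw [Finset.union_empty]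
  have hM2 : ∀ X : Finset (Fin n), X ∈ (∅ : Finset (Finset (Fin n))) ∪ M ↔ X ∈ M := by
    intro X; rw [Finset.empty_union]
  refine ⟨?_, ?_, ?_, ?_, ?_, ?_⟩
  · intro C hC; exact hL.sizesM C hC
  · intro C hC; exact absurd hC (Finset.notMem_empty C)
  · intro X hX Y hY hXY
    exact hL.disj X ((hM2 X).mpr ((hM X).mp hX)) Y ((hM2 Y).mpr ((hM Y).mp hY)) hXY
  · intro v
    obtain ⟨X, hX, hvX⟩ := hL.cover v
    exact ⟨X, (hM X).mpr ((hM2 X).mp hX), hvX⟩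
  · intro X hX; exact hL.conn X ((hM2 X).mpr ((hM X).mp hX))
  · intro e he
    obtain ⟨X, hX, h1⟩ := hL.edges e he
    exact ⟨X, (hM X).mpr ((hM2 X).mp hX), h1⟩

lemma no_pair_empty {U : Finset (Finset (Fin n))} (hEven : Even U.card)
    (h2 : ¬ ∃ p : Finset (Fin n) × Finset (Fin n), p.1 ∈ U ∧ p.2 ∈ U ∧ p.1 ≠ p.2) :
    U = ∅ := by
  have hle : U.card ≤ 1 := Finset.card_le_one.mpr (by
    intro a ha b hb
    by_contra hne
    exact h2 ⟨(a, b), ha, hb, hne⟩)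
  rw [Nat.even_iff] at hEven
  exact Finset.card_eq_zero.mp (by omega)

lemma doLevel_struct (θ : ℝ) (T : ℕ) {s : ℕ} (hs : 0 < s) :
    ∀ (f : ℕ) (U M : Finset (Finset (Fin n))) (σ : List (Fin n × Fin n)),
      LInv s U M σ → Even U.card → U.card ≤ 2 * f →
      LInv (2 * s) (doLevel A a0 θ T f U M σ).1 ∅ (doLevel A a0 θ T f U M σ).2
  | 0, U, M, σ, hL, hEven, hcard => by
    rw [doLevel]
    exact terminal_inv hL (Finset.card_eq_zero.mp (by omega))
  | f+1, U, M, σ, hL, hEven, hcard => by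
    rw [doLevel]
    split_ifs with h2
    · obtain ⟨hL', hU', hM'⟩ := step_inv A a0 (T := T) (θ := θ) hL hs h2
      refine doLevel_struct θ T hs f _ _ _ hL' ?_ ?_
      · rw [Nat.even_iff] at hEven ⊢; omega
      · omega
    · exact terminal_inv hL (no_pair_empty hEven h2)

/-! ### Cost lower bound for one level -/

lemma Mcard_ge {ε δ θ : ℝ} {s : ℕ} {U M : Finset (Finset (Fin n))} {σ : List (Fin n × Fin n)}
    (hL : LInv s U M σ) (hs : 0 < s) (hδ : 0 ≤ δ) (hθs : θ = δ * s)
    (hval : validCap ε (cur A a0 σ))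
    (hall : (∀ C ∈ U, ((C.filter fun v => cur A a0 σ v = 1).card : ℝ) ≤ θ) ∨
            (∀ C ∈ U, ((C.filter fun v => cur A a0 σ v = 0).card : ℝ) ≤ θ)) :
    ((1 - ε) * n / 2 - δ * n) / (2 * s) ≤ (M.card : ℝ) := by
  have hs2 : (0:ℝ) < 2 * s := by positivity
  rw [div_le_iff₀ hs2]
  subst hθs
  have hmass : (1 - ε) * n / 2 ≤ δ * n + 2 * s * M.card := by
    rcases hall with hall | hall
    · exact mass_bound A a0 hL hs hval 1 hδ hall
    · exact mass_bound A a0 hL hs hval 0 hδ hall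
  linarith

set_option maxHeartbeats 2000000 in
lemma doLevel_cost {ε δ α θ : ℝ} {T : ℕ} {s : ℕ} {σfin : List (Fin n × Fin n)}
    (hα : 0 < α) (hδ : 0 ≤ δ) (hθs : θ = δ * s) (hθ2 : θ + θ ≤ s) (hT : α * θ ≤ T)
    (hs : 0 < s)
    (hV : ∀ ρ : List (Fin n × Fin n), ρ <+: σfin → validCap ε (cur A a0 ρ)) :
    ∀ (f : ℕ) (U M : Finset (Finset (Fin n))) (σ : List (Fin n × Fin n)),
      LInv s U M σ → Even U.card → U.card ≤ 2 * f →
      (doLevel A a0 θ T f U M σ).2 <+: σfin →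
      cost A a0 α σ + (α * θ) * (((1 - ε) * n / 2 - δ * n) / (2 * s) - M.card)
        ≤ cost A a0 α (doLevel A a0 θ T f U M σ).2
  | 0, U, M, σ, hL, hEven, hcard, hpre => by
    rw [doLevel] at hpre ⊢
    have hU : U = ∅ := Finset.card_eq_zero.mp (by omega)
    have hθ0 : 0 ≤ θ := by rw [hθs]; positivity
    have hN := Mcard_ge A a0 hL hs hδ hθs (hV σ hpre)
      (Or.inl (by intro C hC; rw [hU] at hC; exact absurd hC (Finset.notMem_empty C)))
    have hmul : (α * θ) * (((1 - ε) * n / 2 - δ * n) / (2 * s) - M.card) ≤ 0 :=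
      mul_nonpos_of_nonneg_of_nonpos (by positivity) (by linarith)
    simp only
    linarith
  | f+1, U, M, σ, hL, hEven, hcard, hpre => by
    rw [doLevel] at hpre ⊢
    split_ifs at hpre ⊢ with h2
    · -- a merge step
      obtain ⟨hL', hU', hM'⟩ := step_inv A a0 (θ := θ) (T := T) hL hs h2
      have hEven' : Even ((U.erase (pick A a0 θ σ U).1).erase (pick A a0 θ σ U).2).card := by
        rw [Nat.even_iff] at hEven ⊢; omega
      have hcard' : ((U.erase (pick A a0 θ σ U).1).erase (pick A a0 θ σ U).2).card ≤ 2 * f := by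
        omega
      have ih := doLevel_cost hα hδ hθs hθ2 hT hs hV f _ _ _ hL' hEven' hcard' hpre
      rw [hM'] at ih
      push_cast at ih
      have hθ0 : 0 ≤ θ := by rw [hθs]; positivity
      by_cases hp : ∃ p : Finset (Fin n) × Finset (Fin n),
          p.1 ∈ U ∧ p.2 ∈ U ∧ p.1 ≠ p.2 ∧ paidCond A a0 θ σ p.1 p.2
      · -- paid merge
        have hCne : (pick A a0 θ σ U).1.Nonempty := by
          have := hL.sizesU _ (pick_spec A a0 (θ := θ) (σ := σ) h2).1
          exact Finset.card_pos.mp (by omega)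
        have hpaid := mergeSeq_cost_paid A a0 (T := T) (U := U) (σ := σ) hα hθ0 hT hp hCne
        have hring : (α * θ) * (((1 - ε) * n / 2 - δ * n) / (2 * s) - M.card)
            = (α * θ) * (((1 - ε) * n / 2 - δ * n) / (2 * s) - (M.card + 1)) + α * θ := by ring
        linarith
      · -- unpaid merge
        have hall := no_paid_cases A a0 (s := s) (fun C hC => hL.sizesU C hC) hθ2 h2 hp
        have hσpre : σ <+: σfin :=
          ((mergeSeq_prefix A a0 θ T U σ).trans (doLevel_prefix A a0 θ T f _ _ _)).trans hpre
        have hN := Mcard_ge A a0 hL hs hδ hθs (hV σ hσpre) hall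
        have hmono : cost A a0 α σ ≤ cost A a0 α (doLevel A a0 θ T f
            ((U.erase (pick A a0 θ σ U).1).erase (pick A a0 θ σ U).2)
            (insert ((pick A a0 θ σ U).1 ∪ (pick A a0 θ σ U).2) M) (mergeSeq A a0 θ T U σ)).2 :=
          cost_mono A a0 hα
            ((mergeSeq_prefix A a0 θ T U σ).trans (doLevel_prefix A a0 θ T f _ _ _))
        have hmul : (α * θ) * (((1 - ε) * n / 2 - δ * n) / (2 * s) - M.card) ≤ 0 :=
          mul_nonpos_of_nonneg_of_nonpos (by positivity) (by linarith)
        linarith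
    · -- terminal: no pair left
      have hU : U = ∅ := no_pair_empty hEven h2
      have hθ0 : 0 ≤ θ := by rw [hθs]; positivity
      have hN := Mcard_ge A a0 hL hs hδ hθs (hV σ hpre)
        (Or.inl (by intro C hC; rw [hU] at hC; exact absurd hC (Finset.notMem_empty C)))
      have hmul : (α * θ) * (((1 - ε) * n / 2 - δ * n) / (2 * s) - M.card) ≤ 0 :=
        mul_nonpos_of_nonneg_of_nonpos (by positivity) (by linarith)
      simp only
      linarith

/-! ### The multi-level adversary -/

noncomputable def adv (δ : ℝ) (Tof : ℕ → ℕ) : ℕ → Finset (Finset (Fin n)) × List (Fin n × Fin n)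
  | 0 => (Finset.univ.image fun v : Fin n => {v}, ([] : List (Fin n × Fin n)))
  | k+1 => doLevel A a0 (δ * 2 ^ k) (Tof k) n (adv δ Tof k).1 ∅ (adv δ Tof k).2

lemma LInv_disj' {s : ℕ} {P : Finset (Finset (Fin n))} {σ : List (Fin n × Fin n)}
    (hL : LInv s P ∅ σ) : ∀ C ∈ P, ∀ D ∈ P, C ≠ D → Disjoint C D :=
  fun C hC D hD => hL.disj C (Finset.mem_union_left _ hC) D (Finset.mem_union_left _ hD)

lemma LInv_cover' {s : ℕ} {P : Finset (Finset (Fin n))} {σ : List (Fin n × Fin n)}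
    (hL : LInv s P ∅ σ) : ∀ v : Fin n, ∃ C ∈ P, v ∈ C := by
  intro v
  obtain ⟨C, hC, h⟩ := hL.cover v
  rw [Finset.union_empty] at hC
  exact ⟨C, hC, h⟩

lemma LInv_count {s : ℕ} {P : Finset (Finset (Fin n))} {σ : List (Fin n × Fin n)}
    (hL : LInv s P ∅ σ) : s * P.card = n := by
  have h1 := sum_card_eq P (LInv_disj' hL) (LInv_cover' hL)
  rw [Finset.sum_congr rfl (fun C hC => hL.sizesU C hC), Finset.sum_const, smul_eq_mul,
    mul_comm] at h1
  exact h1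

lemma adv_inv_zero : LInv 1 (Finset.univ.image fun v : Fin n => ({v} : Finset (Fin n))) ∅ [] := by
  constructor
  · intro C hC
    obtain ⟨v, _, rfl⟩ := Finset.mem_image.mp hC
    exact Finset.card_singleton v
  · intro C hC; exact absurd hC (Finset.notMem_empty C)
  · intro X hX Y hY hXY
    rw [Finset.union_empty, Finset.mem_image] at hX hY
    obtain ⟨u, _, rfl⟩ := hX
    obtain ⟨v, _, rfl⟩ := hY
    rw [Finset.disjoint_singleton]
    intro h; exact hXY (h ▸ rfl)
  · intro v
    exact ⟨{v}, Finset.mem_union_left _ (Finset.mem_image_of_mem _ (Finset.mem_univ v)),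
      Finset.mem_singleton_self v⟩
  · intro X hX u hu v hv
    rw [Finset.union_empty, Finset.mem_image] at hX
    obtain ⟨w, _, rfl⟩ := hX
    rw [Finset.mem_singleton] at hu hv
    subst hu; subst hv
    exact Relation.EqvGen.refl _
  · intro e he; exact absurd he List.not_mem_nil

lemma adv_inv {a : ℕ} (hn : n = 2 ^ a) (δ : ℝ) (Tof : ℕ → ℕ) :
    ∀ k, k ≤ a → LInv (2 ^ k) (adv A a0 δ Tof k).1 ∅ (adv A a0 δ Tof k).2
  | 0, _ => by rw [adv]; exact adv_inv_zero
  | k+1, hk => by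
    have ih := adv_inv hn δ Tof k (by omega)
    have hcount := LInv_count ih
    have hcard : (adv A a0 δ Tof k).1.card = 2 ^ (a - k) := by
      have h2 : (2:ℕ) ^ k * 2 ^ (a - k) = n := by rw [← pow_add, hn]; congr 1; omega
      have := hcount.trans h2.symm
      exact Nat.eq_of_mul_eq_mul_left (Nat.two_pow_pos k) this
    rw [adv]
    have hstruct := doLevel_struct A a0 (δ * 2 ^ k) (Tof k) (s := 2 ^ k)
      (Nat.two_pow_pos k) n (adv A a0 δ Tof k).1 ∅ (adv A a0 δ Tof k).2
      ih ?_ ?_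
    · have h2s : 2 * 2 ^ k = 2 ^ (k+1) := by rw [pow_succ]; ring
      rw [← h2s]
      exact hstruct
    · rw [hcard]
      exact (Nat.even_pow.mpr ⟨even_iff_two_dvd.mpr ⟨1, rfl⟩, by omega⟩)
    · rw [hcard, hn]
      calc 2 ^ (a - k) ≤ 2 ^ a := Nat.pow_le_pow_right (by norm_num) (by omega)
      _ ≤ 2 * 2 ^ a := by omega

lemma adv_prefix (δ : ℝ) (Tof : ℕ → ℕ) :
    ∀ k K, k ≤ K → (adv A a0 δ Tof k).2 <+: (adv A a0 δ Tof K).2 := by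
  intro k K hk
  induction K with
  | zero =>
    have : k = 0 := by omega
    subst this; exact List.prefix_refl _
  | succ K ihK =>
    by_cases hkK : k = K + 1
    · subst hkK; exact List.prefix_refl _
    · have h1 := ihK (by omega)
      refine h1.trans ?_
      rw [adv]
      exact doLevel_prefix A a0 _ _ _ _ _ _

lemma adv_cost {a : ℕ} {α ε δ : ℝ} {Tof : ℕ → ℕ} (hn : n = 2 ^ a)
    (hα : 0 < α) (hδ : 0 ≤ δ) (hδ2 : δ + δ ≤ 1)
    (hTof : ∀ k, α * (δ * 2 ^ k) ≤ Tof k) {K : ℕ} (hK : K ≤ a)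
    (hV : ∀ ρ : List (Fin n × Fin n), ρ <+: (adv A a0 δ Tof K).2 → validCap ε (cur A a0 ρ)) :
    ∀ k, k ≤ K →
      (k : ℝ) * (α * δ * (((1 - ε) * n / 2 - δ * n) / 2)) ≤ cost A a0 α (adv A a0 δ Tof k).2 := by
  intro k
  induction k with
  | zero =>
    intro _
    rw [adv, cost_nil]
    norm_num
  | succ k ihk =>
    intro hk1
    have ih := ihk (by omega)
    have hLk := adv_inv A a0 hn δ Tof k (by omega)
    have hcount := LInv_count hLk
    have hcard : (adv A a0 δ Tof k).1.card = 2 ^ (a - k) := by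
      have h2 : (2:ℕ) ^ k * 2 ^ (a - k) = n := by rw [← pow_add, hn]; congr 1; omega
      exact Nat.eq_of_mul_eq_mul_left (Nat.two_pow_pos k) (hcount.trans h2.symm)
    have hspos : (0:ℕ) < 2 ^ k := Nat.two_pow_pos k
    have hθs : δ * (2:ℝ) ^ k = δ * ((2 ^ k : ℕ) : ℝ) := by push_cast; ring
    have hθ2 : δ * (2:ℝ) ^ k + δ * 2 ^ k ≤ ((2 ^ k : ℕ) : ℝ) := by
      push_cast
      nlinarith [pow_pos (by norm_num : (0:ℝ) < 2) k]
    have hpre : (doLevel A a0 (δ * 2 ^ k) (Tof k) n (adv A a0 δ Tof k).1 ∅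
        (adv A a0 δ Tof k).2).2 <+: (adv A a0 δ Tof K).2 := by
      have : (adv A a0 δ Tof (k+1)).2 <+: (adv A a0 δ Tof K).2 := adv_prefix A a0 δ Tof _ _ hk1
      rw [adv] at this
      exact this
    have hbound := doLevel_cost A a0 (T := Tof k) (s := 2 ^ k) (σfin := (adv A a0 δ Tof K).2)
      hα hδ hθs hθ2 (hTof k) hspos hV n (adv A a0 δ Tof k).1 ∅ (adv A a0 δ Tof k).2
      hLk ?_ ?_ hpre
    · rw [adv]
      have hMempty : ((∅ : Finset (Finset (Fin n))).card : ℝ) = 0 := by simp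
      rw [hMempty] at hbound
      have hgain : (α * (δ * 2 ^ k)) * (((1 - ε) * n / 2 - δ * n) / (2 * ((2 ^ k : ℕ) : ℝ)) - 0)
          = α * δ * (((1 - ε) * n / 2 - δ * n) / 2) := by
        have h2k : ((2 ^ k : ℕ) : ℝ) = (2:ℝ) ^ k := by push_cast; ring
        rw [h2k]
        have hne : (2:ℝ) ^ k ≠ 0 := by positivity
        field_simp
        ring
      rw [hgain] at hbound
      push_cast
      linarith
    · rw [hcard]
      exact (Nat.even_pow.mpr ⟨even_iff_two_dvd.mpr ⟨1, rfl⟩, by omega⟩)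
    · rw [hcard, hn]
      calc 2 ^ (a - k) ≤ 2 ^ a := Nat.pow_le_pow_right (by norm_num) (by omega)
      _ ≤ 2 * 2 ^ a := by omega

lemma card_filter_lt (m : ℕ) (hm : m ≤ n) :
    (Finset.univ.filter fun v : Fin n => (v : ℕ) < m).card = m := by
  classical
  have himg : (Finset.univ.filter fun v : Fin n => (v : ℕ) < m).image Fin.val
      = Finset.range m := by
    ext x
    simp only [Finset.mem_image, Finset.mem_filter, Finset.mem_univ, true_and, Finset.mem_range]
    constructor
    · rintro ⟨v, hv, rfl⟩; exact hv
    · intro hx; exact ⟨⟨x, lt_of_lt_of_le hx hm⟩, hx, rfl⟩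
  have hc := Finset.card_image_of_injective
    (Finset.univ.filter fun v : Fin n => (v : ℕ) < m) Fin.val_injective
  rw [himg, Finset.card_range] at hc
  exact hc.symm

end Basic

end LB

open LB

set_option maxHeartbeats 4000000 in
/-- **Ω(log n) lower bound.** There is a universal constant `c > 0` such
that for two servers of capacity `(1+ε)·n/2`, where `0 < ε ≤ 0.98` and `n = 2^a` is a
sufficiently large power of two (`a ≥ 1000`): for every deterministic online algorithm
that always maintains a valid assignment (and ends with each ground-truth component
alone on one server), there is an instance on which the algorithm's total cost is at
least `c·α·n·log₂ n` while the optimal offline cost is at most `α·n`. Hence every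
deterministic online algorithm is `Ω(log n)`. -/
theorem stmt12 :
    ∃ c : ℝ, 0 < c ∧
      ∀ (a n : ℕ) (α ε : ℝ), 1000 ≤ a → n = 2 ^ a → 1 < α → 0 < ε → ε ≤ 0.98 →
        ∀ A : OnlineAlg n 2,
          (∀ I : ReInstance n 2,
            (∀ t, validCap ε (state A I.init I.sigma t)) ∧
            isPerfect I.truth (state A I.init I.sigma I.sigma.length)) →
          ∃ I : ReInstance n 2,
            c * (α * n * Real.logb 2 n) ≤ algCost α A I.init I.sigma ∧
            OPTcost α ε I ≤ α * n := by
  classical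
  refine ⟨1/200000, by norm_num, ?_⟩
  intro a n α ε ha hn hα hε hε2 A hA
  have hα0 : (0:ℝ) < α := lt_trans one_pos hα
  set δ : ℝ := 1/256 with hδdef
  have hδ : (0:ℝ) ≤ δ := by norm_num [hδdef]
  have hδ2 : δ + δ ≤ 1 := by norm_num [hδdef]
  set Tof : ℕ → ℕ := fun k => ⌈α * (δ * 2 ^ k)⌉₊ with hTofdef
  have hTof : ∀ k, α * (δ * 2 ^ k) ≤ (Tof k : ℝ) := fun k => Nat.le_ceil _
  set a0 : Fin n → Fin 2 := fun v => if (v : ℕ) < n / 2 then (0 : Fin 2) else 1 with ha0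
  set σfin := (adv A a0 δ Tof (a-1)).2 with hσfin
  set P := (adv A a0 δ Tof (a-1)).1 with hP
  have hL : LInv (2 ^ (a-1)) P ∅ σfin := adv_inv A a0 hn δ Tof (a-1) (by omega)
  -- n = 2 * 2^(a-1)
  have hpow : n = 2 * 2 ^ (a-1) := by
    rw [hn]
    have h2 : (2:ℕ) ^ a = 2 ^ ((a-1)+1) := by congr 1; omega
    rw [h2, pow_succ]
    ring
  have hn2 : n / 2 = 2 ^ (a-1) := by omega
  have hPcard : P.card = 2 := by
    have h1 := LInv_count hL
    have h2 : (2:ℕ) ^ (a-1) * 2 = n := by omega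
    exact Nat.eq_of_mul_eq_mul_left (Nat.two_pow_pos _) (h1.trans h2.symm)
  obtain ⟨C₀, C₁, hne01, hPeq⟩ := Finset.card_eq_two.mp hPcard
  have hC₀ : C₀ ∈ P := by rw [hPeq]; simp
  have hC₁ : C₁ ∈ P := by rw [hPeq]; simp
  have hC₀card : C₀.card = 2 ^ (a-1) := hL.sizesU C₀ hC₀
  have hC₁card : C₁.card = 2 ^ (a-1) := hL.sizesU C₁ hC₁
  have hdisj01 : Disjoint C₀ C₁ := LInv_disj' hL C₀ hC₀ C₁ hC₁ hne01
  have hmemP : ∀ X ∈ P, X = C₀ ∨ X = C₁ := by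
    intro X hX
    rw [hPeq, Finset.mem_insert, Finset.mem_singleton] at hX
    exact hX
  have hC1mem : ∀ v : Fin n, v ∉ C₀ → v ∈ C₁ := by
    intro v hv
    obtain ⟨X, hX, hvX⟩ := LInv_cover' hL v
    rcases hmemP X hX with rfl | rfl
    · exact absurd hvX hv
    · exact hvX
  have hnotC₀ : ∀ v ∈ C₁, v ∉ C₀ := by
    intro v hv
    exact Finset.disjoint_right.mp hdisj01 hv
  set truth : Fin n → Fin 2 := fun v => if v ∈ C₀ then 0 else 1 with htruth
  -- truth sizes
  have hts : ∀ j, (Finset.univ.filter fun v => truth v = j).card = n / 2 := by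
    intro j
    rcases fin2_cases j with rfl | rfl
    · have hset : (Finset.univ.filter fun v => truth v = 0) = C₀ := by
        ext v
        simp only [Finset.mem_filter, Finset.mem_univ, true_and, htruth]
        by_cases h : v ∈ C₀
        · rw [if_pos h]
          exact iff_of_true rfl h
        · rw [if_neg h]
          exact iff_of_false (by decide) h
      rw [hset, hC₀card, hn2]
    · have hset : (Finset.univ.filter fun v => truth v = 1) = C₁ := by
        ext v
        simp only [Finset.mem_filter, Finset.mem_univ, true_and, htruth]
        by_cases h : v ∈ C₀
        · rw [if_pos h]
          constructor
          · intro hc; exact absurd hc (by decide)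
          · intro hc; exact absurd h (hnotC₀ v hc)
        · rw [if_neg h]
          exact ⟨fun _ => hC1mem v h, fun _ => rfl⟩
      rw [hset, hC₁card, hn2]
  -- init sizes
  have his : ∀ j, (Finset.univ.filter fun v => a0 v = j).card = n / 2 := by
    intro j
    rcases fin2_cases j with rfl | rfl
    · have hset : (Finset.univ.filter fun v => a0 v = 0) =
          (Finset.univ.filter fun v : Fin n => (v : ℕ) < n / 2) := by
        apply Finset.filter_congr
        intro v _
        simp only [ha0]
        by_cases h : (v : ℕ) < n / 2
        · rw [if_pos h]
          exact iff_of_true rfl h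
        · rw [if_neg h]
          exact iff_of_false (by decide) h
      rw [hset, card_filter_lt (n/2) (by omega)]
    · have hp := filter_fin2_card (Finset.univ : Finset (Fin n)) a0 0
      have h01 : ((0 : Fin 2) + 1) = 1 := rfl
      rw [h01] at hp
      have h0 : (Finset.univ.filter fun v => a0 v = 0).card = n / 2 := by
        have hset : (Finset.univ.filter fun v => a0 v = 0) =
            (Finset.univ.filter fun v : Fin n => (v : ℕ) < n / 2) := by
          apply Finset.filter_congr
          intro v _
          simp only [ha0]
          by_cases h : (v : ℕ) < n / 2
          · rw [if_pos h]
            exact iff_of_true rfl h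
          · rw [if_neg h]
            exact iff_of_false (by decide) h
        rw [hset, card_filter_lt (n/2) (by omega)]
      have hcu : (Finset.univ : Finset (Fin n)).card = n := by simp
      omega
  -- edges within
  have hew : ∀ e ∈ σfin, truth e.1 = truth e.2 := by
    intro e he
    obtain ⟨X, hX, h1, h2⟩ := hL.edges e he
    rw [Finset.union_empty] at hX
    rcases hmemP X hX with rfl | rfl
    · simp only [htruth]
      rw [if_pos h1, if_pos h2]
    · simp only [htruth]
      rw [if_neg (hnotC₀ _ h1), if_neg (hnotC₀ _ h2)]
  -- reveals
  have hrv : ∀ u v, sameComp σfin u v ↔ truth u = truth v := by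
    intro u v
    constructor
    · intro h
      induction h with
      | rel x y hxy =>
        rcases hxy with hxy | hxy
        · exact hew (x, y) hxy
        · exact (hew (y, x) hxy).symm
      | refl x => rfl
      | symm x y _ ih => exact ih.symm
      | trans x y z _ _ ih1 ih2 => exact ih1.trans ih2
    · intro h
      by_cases hu : u ∈ C₀ <;> by_cases hv : v ∈ C₀
      · exact hL.conn C₀ (Finset.mem_union_left _ hC₀) u hu v hv
      · exfalso
        simp only [htruth] at h
        rw [if_pos hu, if_neg hv] at h
        exact absurd h (by decide)
      · exfalso
        simp only [htruth] at h
        rw [if_neg hu, if_pos hv] at h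
        exact absurd h (by decide)
      · exact hL.conn C₁ (Finset.mem_union_left _ hC₁) u (hC1mem u hu) v (hC1mem v hv)
  set I : ReInstance n 2 := ⟨truth, a0, σfin, hts, his, hew, hrv⟩ with hI
  obtain ⟨hIv, hIperf⟩ := hA I
  have hV : ∀ ρ : List (Fin n × Fin n), ρ <+: σfin → validCap ε (cur A a0 ρ) := by
    intro ρ hρ
    rw [cur_of_prefix A a0 hρ]
    exact hIv ρ.length
  have hcost := adv_cost A a0 hn hα0 hδ hδ2 hTof (K := a-1) (by omega) hV (a-1) le_rfl
  refine ⟨I, ?_, ?_⟩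
  · -- the cost lower bound
    show (1/200000 : ℝ) * (α * n * Real.logb 2 n) ≤ algCost α A a0 σfin
    have hcost' : ((a-1 : ℕ) : ℝ) * (α * δ * (((1 - ε) * n / 2 - δ * n) / 2))
        ≤ algCost α A a0 σfin := hcost
    -- logb 2 n = a
    have hlogb : Real.logb 2 (n : ℝ) = a := by
      rw [hn]
      push_cast
      rw [Real.logb, Real.log_pow]
      have : Real.log 2 ≠ 0 := ne_of_gt (Real.log_pos (by norm_num))
      field_simp
    rw [hlogb]
    have hacast : ((a-1 : ℕ) : ℝ) = (a : ℝ) - 1 := by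
      have : (1:ℕ) ≤ a := by omega
      push_cast [Nat.cast_sub this]
      ring
    rw [hacast] at hcost'
    have hnpos : (0:ℝ) ≤ (n:ℝ) := Nat.cast_nonneg n
    have ha1000 : (1000 : ℝ) ≤ (a : ℝ) := by exact_mod_cast ha
    -- numeric estimates
    have hslack : (0.006 : ℝ) * n ≤ (1 - ε) * n / 2 - δ * n := by
      rw [hδdef]
      nlinarith
    have hG : α * (n : ℝ) * (1/100000) ≤ α * δ * (((1 - ε) * n / 2 - δ * n) / 2) := by
      rw [hδdef]
      nlinarith
    have hGpos : (0:ℝ) ≤ α * δ * (((1 - ε) * n / 2 - δ * n) / 2) := by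
      nlinarith
    calc (1/200000 : ℝ) * (α * n * a) ≤ ((a:ℝ) - 1) * (α * n * (1/100000)) := by nlinarith
    _ ≤ ((a:ℝ) - 1) * (α * δ * (((1 - ε) * n / 2 - δ * n) / 2)) := by
        apply mul_le_mul_of_nonneg_left _ (by linarith)
        linarith [hG]
    _ ≤ algCost α A a0 σfin := hcost'
  · -- the OPT upper bound
    show OPTcost α ε I ≤ α * n
    set g : ℕ → Fin n → Fin 2 := fun _ => truth with hg
    have hval : ∀ t, validCap ε (g t) := by
      intro t j
      show ((Finset.univ.filter fun v => truth v = j).card : ℝ) ≤ (1 + ε) * n / 2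
      rw [hts j]
      have hc : ((n/2 : ℕ) : ℝ) * 2 = (n : ℝ) := by
        have : (n/2) * 2 = n := by omega
        exact_mod_cast congrArg (Nat.cast : ℕ → ℝ) this
      linarith [mul_nonneg hε.le (Nat.cast_nonneg (α := ℝ) n)]
    have hperf : isPerfect I.truth (g σfin.length) := fun u v => Iff.rfl
    have hmem : α * (schedMoves a0 σfin g : ℝ) + (schedComm σfin g : ℝ) ∈
        { c : ℝ | ∃ g' : ℕ → Fin n → Fin 2,
          (∀ t, validCap ε (g' t)) ∧ isPerfect I.truth (g' I.sigma.length) ∧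
          c = α * schedMoves I.init I.sigma g' + schedComm I.sigma g' } :=
      ⟨g, hval, hperf, rfl⟩
    have hbdd : BddBelow { c : ℝ | ∃ g' : ℕ → Fin n → Fin 2,
        (∀ t, validCap ε (g' t)) ∧ isPerfect I.truth (g' I.sigma.length) ∧
        c = α * schedMoves I.init I.sigma g' + schedComm I.sigma g' } := by
      refine ⟨0, ?_⟩
      rintro x ⟨g', _, _, rfl⟩
      positivity
    have h1 : OPTcost α ε I ≤ α * (schedMoves a0 σfin g : ℝ) + (schedComm σfin g : ℝ) :=
      csInf_le hbdd hmem
    have hcomm : schedComm σfin g = 0 := by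
      rw [schedComm]
      apply Finset.sum_eq_zero
      intro t _
      rw [if_neg]
      simp only [hg, not_not]
      exact hew _ (List.get_mem σfin t)
    have hmoves : (schedMoves a0 σfin g : ℝ) ≤ n := by
      rw [schedMoves]
      have h2 : ∀ t ∈ Finset.range σfin.length, movesBetween (g t) (g (t+1)) = 0 := by
        intro t _
        exact movesBetween_self truth
      rw [Finset.sum_congr rfl h2, Finset.sum_const, smul_zero, add_zero]
      have : movesBetween a0 truth ≤ n := by
        rw [movesBetween]
        calc (Finset.univ.filter fun v => a0 v ≠ truth v).card
            ≤ (Finset.univ : Finset (Fin n)).card := Finset.card_le_card (Finset.filter_subset _ _)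
          _ = n := by simp
      exact_mod_cast this
    rw [hcomm] at h1
    push_cast at h1
    rw [add_zero] at h1
    calc OPTcost α ε I ≤ α * (schedMoves a0 σfin g : ℝ) := h1
    _ ≤ α * n := mul_le_mul_of_nonneg_left hmoves hα0.le
end
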